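/- arXiv:1208.0472 — 6 statements merged into one kernel-verified Lean document; each statement's English description precedes it below -/
import Mathlib

section
/- Let ψ : Y → X be a Borel measurable map between Polish spaces, let η be a probability measure on X and γ₀ a probability measure on Y. Then the relative entropy of η with respect to the pushforward ψ(γ₀) equals the infimum, over all probability measures γ on Y with ψ(γ) = η, of the relative entropy of γ with respect to γ₀ (with inf ∅ = ∞). -/
open MeasureTheory ProbabilityTheory Real Filter Topology
open scoped Classical ENNReal NNReal

/-- Relative entropy `R(ν ‖ μ)`: `∫ log (dν/dμ) dν` if `ν ≪ μ` (and the log-likelihood ratio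
is `ν`-integrable), and `∞` otherwise. -/
noncomputable def relEnt {S : Type*} [MeasurableSpace S] (ν μ : Measure S) : EReal :=
  if ν ≪ μ ∧ Integrable (llr ν μ) ν then ((∫ x, llr ν μ x ∂ν : ℝ) : EReal) else ⊤

section Aux

variable {α : Type*} [MeasurableSpace α]

/-- The negative part of the log-likelihood ratio is always integrable. -/
lemma integrable_negPart_llr (μ ν : Measure α) [IsFiniteMeasure μ] [IsFiniteMeasure ν]
    (hμν : μ ≪ ν) : Integrable (fun x ↦ max (- llr μ ν x) 0) μ := by
  have hg : Integrable (fun x ↦ (ν.rnDeriv μ x).toReal) μ := Measure.integrable_toReal_rnDeriv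
  refine hg.mono (((measurable_llr μ ν).neg.max measurable_const).aestronglyMeasurable) ?_
  filter_upwards [exp_neg_llr hμν] with x hx
  rw [Real.norm_eq_abs, Real.norm_eq_abs, abs_of_nonneg (le_max_right _ _),
    abs_of_nonneg ENNReal.toReal_nonneg, ← hx]
  refine max_le ?_ (Real.exp_pos _).le
  linarith [Real.add_one_le_exp (- llr μ ν x)]

/-- Nonnegativity of relative entropy (via Jensen's inequality). -/
lemma integral_llr_nonneg' {μ ν : Measure α} [IsProbabilityMeasure μ] [IsProbabilityMeasure ν]
    (hμν : μ ≪ ν) (h_int : Integrable (llr μ ν) μ) : 0 ≤ ∫ x, llr μ ν x ∂μ := by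
  have hg : Integrable (fun x ↦ (ν.rnDeriv μ x).toReal) μ := Measure.integrable_toReal_rnDeriv
  have hexp : (fun x ↦ exp (- llr μ ν x)) =ᵐ[μ] fun x ↦ (ν.rnDeriv μ x).toReal := exp_neg_llr hμν
  have h_jensen : exp (∫ x, - llr μ ν x ∂μ) ≤ ∫ x, exp (- llr μ ν x) ∂μ :=
    convexOn_exp.map_integral_le continuous_exp.continuousOn isClosed_univ
      (Filter.Eventually.of_forall fun x ↦ Set.mem_univ (- llr μ ν x)) h_int.neg
      ((integrable_congr hexp).mpr hg)
  have h1 : ∫ x, exp (- llr μ ν x) ∂μ ≤ 1 := by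
    rw [integral_congr_ae hexp, Measure.integral_toReal_rnDeriv']
    simp only [measureReal_def, measure_univ, ENNReal.toReal_one]
    linarith [ENNReal.toReal_nonneg (a := ν.singularPart μ Set.univ)]
  rw [integral_neg] at h_jensen
  have h2 := Real.exp_le_one_iff.mp (h_jensen.trans h1)
  linarith

end Aux

section Main

variable {X Y : Type*} [MeasurableSpace X] [MeasurableSpace Y]

lemma gstar_isProb (ψ : Y → X) (hψ : Measurable ψ) (η : Measure X) [IsProbabilityMeasure η]
    (γ₀ : Measure Y) [IsProbabilityMeasure γ₀] (hac : η ≪ γ₀.map ψ) :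
    IsProbabilityMeasure (γ₀.withDensity fun y ↦ η.rnDeriv (γ₀.map ψ) (ψ y)) := by
  constructor
  rw [withDensity_apply _ MeasurableSet.univ, setLIntegral_univ,
    ← lintegral_map (Measure.measurable_rnDeriv _ _) hψ, Measure.lintegral_rnDeriv hac,
    measure_univ]

lemma gstar_map (ψ : Y → X) (hψ : Measurable ψ) (η : Measure X) [IsProbabilityMeasure η]
    (γ₀ : Measure Y) [IsProbabilityMeasure γ₀] (hac : η ≪ γ₀.map ψ) :
    (γ₀.withDensity fun y ↦ η.rnDeriv (γ₀.map ψ) (ψ y)).map ψ = η := by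
  haveI : IsProbabilityMeasure (γ₀.map ψ) := Measure.isProbabilityMeasure_map hψ.aemeasurable
  ext s hs
  rw [Measure.map_apply hψ hs, withDensity_apply _ (hψ hs),
    ← setLIntegral_map hs (Measure.measurable_rnDeriv _ _) hψ,
    Measure.setLIntegral_rnDeriv hac]

lemma relEnt_gstar (ψ : Y → X) (hψ : Measurable ψ) (η : Measure X) [IsProbabilityMeasure η]
    (γ₀ : Measure Y) [IsProbabilityMeasure γ₀] (hac : η ≪ γ₀.map ψ)
    (hint : Integrable (llr η (γ₀.map ψ)) η) :
    relEnt (γ₀.withDensity fun y ↦ η.rnDeriv (γ₀.map ψ) (ψ y)) γ₀ = relEnt η (γ₀.map ψ) := by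
  haveI : IsProbabilityMeasure (γ₀.map ψ) := Measure.isProbabilityMeasure_map hψ.aemeasurable
  set m := γ₀.map ψ with hm_def
  set g : Y → ℝ≥0∞ := fun y ↦ η.rnDeriv m (ψ y) with hg_def
  have hg : Measurable g := (Measure.measurable_rnDeriv _ _).comp hψ
  set γs := γ₀.withDensity g with hγs_def
  haveI : IsProbabilityMeasure γs := gstar_isProb ψ hψ η γ₀ hac
  have hmap : γs.map ψ = η := gstar_map ψ hψ η γ₀ hac
  have hγsac : γs ≪ γ₀ := withDensity_absolutelyContinuous _ _
  have hdens : γs.rnDeriv γ₀ =ᵐ[γ₀] g := Measure.rnDeriv_withDensity γ₀ hg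
  have hllr : llr γs γ₀ =ᵐ[γs] fun y ↦ llr η m (ψ y) := by
    filter_upwards [hγsac.ae_le hdens] with y hy
    simp only [llr, hy, hg_def]
  have hint' : Integrable (fun y ↦ llr η m (ψ y)) γs := by
    have h0 : Integrable (llr η m) (γs.map ψ) := by rw [hmap]; exact hint
    exact (integrable_map_measure (stronglyMeasurable_llr _ _).aestronglyMeasurable
      hψ.aemeasurable).mp h0
  have hint2 : Integrable (llr γs γ₀) γs := (integrable_congr hllr).mpr hint'
  have hI : ∫ y, llr γs γ₀ y ∂γs = ∫ x, llr η m x ∂η := by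
    calc ∫ y, llr γs γ₀ y ∂γs = ∫ y, llr η m (ψ y) ∂γs := integral_congr_ae hllr
      _ = ∫ x, llr η m x ∂(γs.map ψ) :=
        (integral_map hψ.aemeasurable (stronglyMeasurable_llr _ _).aestronglyMeasurable).symm
      _ = ∫ x, llr η m x ∂η := by rw [hmap]
  rw [relEnt, relEnt, if_pos ⟨hγsac, hint2⟩, if_pos ⟨hac, hint⟩, hI]

lemma relEnt_map_le (ψ : Y → X) (hψ : Measurable ψ) (γ γ₀ : Measure Y)
    [IsProbabilityMeasure γ] [IsProbabilityMeasure γ₀] :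
    relEnt (γ.map ψ) (γ₀.map ψ) ≤ relEnt γ γ₀ := by
  by_cases h : γ ≪ γ₀ ∧ Integrable (llr γ γ₀) γ
  swap
  · have h' : relEnt γ γ₀ = ⊤ := by rw [relEnt, if_neg h]
    rw [h']; exact le_top
  obtain ⟨hac, hint⟩ := h
  set η := γ.map ψ with hη_def
  set m := γ₀.map ψ with hm_def
  haveI : IsProbabilityMeasure η := Measure.isProbabilityMeasure_map hψ.aemeasurable
  haveI : IsProbabilityMeasure m := Measure.isProbabilityMeasure_map hψ.aemeasurable
  have hηm : η ≪ m := hac.map hψ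
  set g : Y → ℝ≥0∞ := fun y ↦ η.rnDeriv m (ψ y) with hg_def
  have hg : Measurable g := (Measure.measurable_rnDeriv _ _).comp hψ
  set γs := γ₀.withDensity g with hγs_def
  haveI : IsProbabilityMeasure γs := gstar_isProb ψ hψ η γ₀ hηm
  have hγsac : γs ≪ γ₀ := withDensity_absolutelyContinuous _ _
  have hfpos : ∀ᵐ y ∂γ, g y ≠ 0 := by
    have hmeas0 : MeasurableSet {x | η.rnDeriv m x ≠ 0} :=
      ((Measure.measurable_rnDeriv η m) (measurableSet_singleton 0)).compl
    have h0 : ∀ᵐ x ∂(γ.map ψ), η.rnDeriv m x ≠ 0 := by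
      filter_upwards [Measure.rnDeriv_pos hηm] with x hx using hx.ne'
    exact (ae_map_iff hψ.aemeasurable hmeas0).mp h0
  have hgfin : ∀ᵐ y ∂γ, g y ≠ ∞ := by
    have hmeas0 : MeasurableSet {x | η.rnDeriv m x ≠ ∞} :=
      ((Measure.measurable_rnDeriv η m) (measurableSet_singleton ∞)).compl
    have h0 : ∀ᵐ x ∂(γ.map ψ), η.rnDeriv m x ≠ ∞ := hηm.ae_le (Measure.rnDeriv_ne_top η m)
    exact (ae_map_iff hψ.aemeasurable hmeas0).mp h0
  have hγzero : γ {y | g y = 0} = 0 := by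
    have := hfpos
    rw [ae_iff] at this
    simpa using this
  have hγγs : γ ≪ γs := by
    refine Measure.AbsolutelyContinuous.mk fun s hs h0 ↦ ?_
    rw [hγs_def, withDensity_apply _ hs] at h0
    have hzero : ∀ᵐ y ∂(γ₀.restrict s), g y = 0 := by
      rwa [lintegral_eq_zero_iff hg] at h0
    have h1 : γ₀ {y | y ∈ s ∧ g y ≠ 0} = 0 := by
      have h2 := (ae_restrict_iff' hs).mp hzero
      rw [ae_iff] at h2
      simpa [Classical.not_imp] using h2
    have hsub : s ⊆ {y | y ∈ s ∧ g y ≠ 0} ∪ {y | g y = 0} := by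
      intro y hy
      by_cases hgy : g y = 0
      · exact Or.inr hgy
      · exact Or.inl ⟨hy, hgy⟩
    refine le_antisymm ?_ zero_le
    calc γ s ≤ γ ({y | y ∈ s ∧ g y ≠ 0} ∪ {y | g y = 0}) := measure_mono hsub
      _ ≤ γ {y | y ∈ s ∧ g y ≠ 0} + γ {y | g y = 0} := measure_union_le _ _
      _ = 0 := by rw [hac h1, hγzero, add_zero]
  have hdens : γs.rnDeriv γ₀ =ᵐ[γ₀] g := Measure.rnDeriv_withDensity γ₀ hg
  have hchain : γ.rnDeriv γs * γs.rnDeriv γ₀ =ᵐ[γ₀] γ.rnDeriv γ₀ :=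
    Measure.rnDeriv_mul_rnDeriv hγγs
  have hL : llr γ γ₀ =ᵐ[γ] fun y ↦ llr γ γs y + llr η m (ψ y) := by
    filter_upwards [hac.ae_le hchain, hac.ae_le hdens, Measure.rnDeriv_pos hγγs,
      hγγs.ae_le (Measure.rnDeriv_lt_top γ γs), hfpos, hgfin] with y h1 h2 h3 h4 h5 h6
    have hA : (γ.rnDeriv γs y).toReal ≠ 0 := by
      simp [ENNReal.toReal_eq_zero_iff, h3.ne', h4.ne]
    have hB : (g y).toReal ≠ 0 := by
      simp [ENNReal.toReal_eq_zero_iff, h5, h6]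
    simp only [llr]
    rw [← h1, Pi.mul_apply, h2, ENNReal.toReal_mul, log_mul hA hB]
  have hN1 : Integrable (fun y ↦ max (- llr γ γs y) 0) γ := integrable_negPart_llr γ γs hγγs
  have hN2 : Integrable (fun y ↦ max (- llr η m (ψ y)) 0) γ := by
    have h2 : Integrable (fun x ↦ max (- llr η m x) 0) (γ.map ψ) := integrable_negPart_llr η m hηm
    exact (integrable_map_measure
      (((measurable_llr _ _).neg.max measurable_const).aestronglyMeasurable)
      hψ.aemeasurable).mp h2
  have hL1 : Integrable (llr γ γs) γ := by
    refine Integrable.mono (hint.abs.add (hN2.add hN1))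
      (stronglyMeasurable_llr _ _).aestronglyMeasurable ?_
    filter_upwards [hL] with y hy
    have hb : (0:ℝ) ≤ |llr γ γ₀ y| + (max (- llr η m (ψ y)) 0 + max (- llr γ γs y) 0) := by
      positivity
    simp only [Pi.add_apply, Real.norm_eq_abs]
    rw [abs_of_nonneg hb]
    have h1 : llr γ γ₀ y ≤ |llr γ γ₀ y| := le_abs_self _
    have h2 : - llr η m (ψ y) ≤ max (- llr η m (ψ y)) 0 := le_max_left _ _
    have h3 : - llr γ γs y ≤ max (- llr γ γs y) 0 := le_max_left _ _
    have h4 : (0:ℝ) ≤ max (- llr η m (ψ y)) 0 := le_max_right _ _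
    have h5 : (0:ℝ) ≤ max (- llr γ γs y) 0 := le_max_right _ _
    have h6 : (0:ℝ) ≤ |llr γ γ₀ y| := abs_nonneg _
    rcases abs_cases (llr γ γs y) with ⟨he, _⟩ | ⟨he, _⟩ <;> rw [he] <;> linarith
  have hL2 : Integrable (fun y ↦ llr η m (ψ y)) γ := by
    refine (hint.sub hL1).congr ?_
    filter_upwards [hL] with y hy
    simp only [Pi.sub_apply] at *
    linarith
  have hintη : Integrable (llr η m) η := by
    rw [hη_def]
    exact (integrable_map_measure (stronglyMeasurable_llr _ _).aestronglyMeasurable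
      hψ.aemeasurable).mpr hL2
  have hIeq : ∫ y, llr γ γ₀ y ∂γ = ∫ y, llr γ γs y ∂γ + ∫ x, llr η m x ∂η := by
    rw [integral_congr_ae hL, integral_add hL1 hL2]
    congr 1
    calc ∫ y, llr η m (ψ y) ∂γ = ∫ x, llr η m x ∂(γ.map ψ) :=
          (integral_map hψ.aemeasurable (stronglyMeasurable_llr _ _).aestronglyMeasurable).symm
      _ = ∫ x, llr η m x ∂η := rfl
  have hpos : 0 ≤ ∫ y, llr γ γs y ∂γ := integral_llr_nonneg' hγγs hL1
  rw [relEnt, relEnt, if_pos ⟨hηm, hintη⟩, if_pos ⟨hac, hint⟩, EReal.coe_le_coe_iff, hIeq]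
  linarith

end Main

/-- Contraction property of relative entropy: for Borel measurable `ψ : Y → X` between Polish
spaces, `R(η ‖ ψ(γ₀)) = inf { R(γ ‖ γ₀) : γ ∈ P(Y), ψ(γ) = η }` (with `inf ∅ = ∞`). -/
theorem stmt0 {X Y : Type*}
    [MeasurableSpace X] [TopologicalSpace X] [PolishSpace X] [BorelSpace X]
    [MeasurableSpace Y] [TopologicalSpace Y] [PolishSpace Y] [BorelSpace Y]
    (ψ : Y → X) (hψ : Measurable ψ)
    (η : Measure X) [IsProbabilityMeasure η]
    (γ₀ : Measure Y) [IsProbabilityMeasure γ₀] :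
    relEnt η (γ₀.map ψ) =
      ⨅ γ : {γ : Measure Y // IsProbabilityMeasure γ ∧ γ.map ψ = η}, relEnt γ.1 γ₀ := by
  refine le_antisymm (le_iInf fun γp ↦ ?_) ?_
  · obtain ⟨γ, hprob, hmap⟩ := γp
    haveI := hprob
    have := relEnt_map_le ψ hψ γ γ₀
    rwa [hmap] at this
  · by_cases h : η ≪ γ₀.map ψ ∧ Integrable (llr η (γ₀.map ψ)) η
    · obtain ⟨hac, hint⟩ := h
      exact iInf_le_of_le ⟨γ₀.withDensity fun y ↦ η.rnDeriv (γ₀.map ψ) (ψ y),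
        gstar_isProb ψ hψ η γ₀ hac, gstar_map ψ hψ η γ₀ hac⟩
        (relEnt_gstar ψ hψ η γ₀ hac hint).le
    · rw [relEnt, if_neg h]; exact le_top
end

section
/- Let ψ : Y → X be Borel measurable between Polish spaces, γ₀ a probability measure on Y, and η a probability measure on X with R(η‖ψ(γ₀)) < ∞. Let f = dη/d(ψ(γ₀)) and define γ(dy) := f(ψ(y)) γ₀(dy). Then γ is a probability measure on Y with pushforward ψ(γ) = η, and R(γ‖γ₀) = R(η‖ψ(γ₀)); in particular γ attains the infimum in the contraction formula for relative entropy. -/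
open MeasureTheory ProbabilityTheory Real Filter Topology
open scoped Classical ENNReal NNReal

lemma my_integral_llr_nonneg {α : Type*} [MeasurableSpace α] {μ ν : Measure α}
    [IsProbabilityMeasure μ] [IsProbabilityMeasure ν] (h : μ ≪ ν)
    (hint : Integrable (llr μ ν) μ) : 0 ≤ ∫ x, llr μ ν x ∂μ := by
  have h1 : Integrable (fun x => exp (-llr μ ν x)) μ := by
    rw [integrable_congr (exp_neg_llr h)]
    exact Measure.integrable_toReal_rnDeriv
  have h2 : ∫ x, exp (-llr μ ν x) ∂μ ≤ 1 := by
    rw [integral_congr_ae (exp_neg_llr h)]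
    calc ∫ x, (ν.rnDeriv μ x).toReal ∂μ ≤ (ν Set.univ).toReal := by
          rw [← setIntegral_univ]
          exact Measure.setIntegral_toReal_rnDeriv_le (measure_ne_top ν _)
      _ = 1 := by simp
  have hJ : exp (∫ x, -llr μ ν x ∂μ) ≤ ∫ x, exp (-llr μ ν x) ∂μ :=
    convexOn_exp.map_integral_le continuous_exp.continuousOn isClosed_univ
      (Filter.Eventually.of_forall fun _ => Set.mem_univ _) hint.neg h1
  rw [integral_neg] at hJ
  have := exp_le_one_iff.mp (hJ.trans h2)
  linarith


/-- The explicit minimizer in the contraction formula: if `R(η ‖ ψ(γ₀)) < ∞` and `f` is a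
Radon–Nikodym density of `η` w.r.t. `ψ(γ₀)`, then `γ(dy) := f(ψ(y)) γ₀(dy)` is a probability
measure with `ψ(γ) = η` and `R(γ ‖ γ₀) = R(η ‖ ψ(γ₀))`; in particular `γ` attains the infimum. -/
theorem stmt1 {X Y : Type*}
    [MeasurableSpace X] [TopologicalSpace X] [PolishSpace X] [BorelSpace X]
    [MeasurableSpace Y] [TopologicalSpace Y] [PolishSpace Y] [BorelSpace Y]
    (ψ : Y → X) (hψ : Measurable ψ)
    (η : Measure X) [IsProbabilityMeasure η]
    (γ₀ : Measure Y) [IsProbabilityMeasure γ₀]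
    (hfin : relEnt η (γ₀.map ψ) < ⊤)
    (f : X → ℝ≥0∞) (hf : Measurable f) (hη : η = (γ₀.map ψ).withDensity f) :
    IsProbabilityMeasure (γ₀.withDensity fun y => f (ψ y)) ∧
    (γ₀.withDensity fun y => f (ψ y)).map ψ = η ∧
    relEnt (γ₀.withDensity fun y => f (ψ y)) γ₀ = relEnt η (γ₀.map ψ) ∧
    relEnt (γ₀.withDensity fun y => f (ψ y)) γ₀ =
      ⨅ γ : {γ : Measure Y // IsProbabilityMeasure γ ∧ γ.map ψ = η}, relEnt γ.1 γ₀ := by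
  set m : Measure X := γ₀.map ψ with hm_def
  have hmprob : IsProbabilityMeasure m := Measure.isProbabilityMeasure_map hψ.aemeasurable
  set γ : Measure Y := γ₀.withDensity (fun y => f (ψ y)) with hγ_def
  have hfψ : Measurable fun y => f (ψ y) := hf.comp hψ
  -- extract finiteness data
  have hcond : η ≪ m ∧ Integrable (llr η m) η := by
    by_contra hc
    rw [relEnt, if_neg hc] at hfin
    exact absurd hfin (lt_irrefl _)
  obtain ⟨hηm, hηint⟩ := hcond
  have hrelη : relEnt η m = ((∫ x, llr η m x ∂η : ℝ) : EReal) := by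
    rw [relEnt, if_pos ⟨hηm, hηint⟩]
  -- Step A : pushforward
  have hmap : γ.map ψ = η := by
    ext s hs
    rw [Measure.map_apply hψ hs, hγ_def, withDensity_apply _ (hψ hs), hη,
      withDensity_apply _ hs, ← setLIntegral_map hs hf hψ]
  have hγ_ac : γ ≪ γ₀ := withDensity_absolutelyContinuous _ _
  -- Step B : probability measure
  have hγprob : IsProbabilityMeasure γ := by
    constructor
    have : (γ.map ψ) Set.univ = 1 := by rw [hmap]; exact measure_univ
    rwa [Measure.map_apply hψ MeasurableSet.univ, Set.preimage_univ] at this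
  -- densities
  have hrnγ : γ.rnDeriv γ₀ =ᵐ[γ₀] fun y => f (ψ y) :=
    Measure.rnDeriv_withDensity γ₀ hfψ
  have hrnη : η.rnDeriv m =ᵐ[m] f := by
    rw [hη]; exact Measure.rnDeriv_withDensity m hf
  set g : X → ℝ := fun x => Real.log (f x).toReal with hg_def
  have hgmeas : Measurable g := (ENNReal.measurable_toReal.comp hf).log
  have hllrη : llr η m =ᵐ[η] g := by
    filter_upwards [hηm.ae_le hrnη] with x hx
    simp only [llr, hx, hg_def]
  have hgint : Integrable g η := (integrable_congr hllrη).mp hηint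
  have hllrγ₀ : llr γ γ₀ =ᵐ[γ₀] fun y => g (ψ y) := by
    filter_upwards [hrnγ] with y hy
    simp only [llr, hy, hg_def]
  -- integral of g ∘ ψ over any γ' mapping to η
  have key : ∀ (γ' : Measure Y), γ'.map ψ = η →
      (Integrable (fun y => g (ψ y)) γ' ∧ ∫ y, g (ψ y) ∂γ' = ∫ x, llr η m x ∂η) := by
    intro γ' hγ'map
    constructor
    · exact (integrable_map_measure hgmeas.aestronglyMeasurable hψ.aemeasurable).mp
        (by rwa [hγ'map])
    · rw [integral_congr_ae hllrη, ← hγ'map,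
        integral_map hψ.aemeasurable hgmeas.aestronglyMeasurable]
  -- Step E : relEnt equality
  have hγint : Integrable (llr γ γ₀) γ :=
    (integrable_congr (hγ_ac.ae_le hllrγ₀)).mpr (key γ hmap).1
  have hγ_integral : ∫ y, llr γ γ₀ y ∂γ = ∫ x, llr η m x ∂η := by
    rw [integral_congr_ae (hγ_ac.ae_le hllrγ₀)]
    exact (key γ hmap).2
  have hrelγ : relEnt γ γ₀ = ((∫ x, llr η m x ∂η : ℝ) : EReal) := by
    rw [relEnt, if_pos ⟨hγ_ac, hγint⟩, hγ_integral]
  -- η gives no mass to {f = 0}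
  have hfzero : η {x | f x = 0} = 0 := by
    have hms : MeasurableSet {x | f x = 0} := hf (measurableSet_singleton 0)
    rw [hη, withDensity_apply _ hms]
    have : ∀ᵐ x ∂m, x ∈ {x | f x = 0} → f x = 0 := Filter.Eventually.of_forall fun x hx => hx
    rw [setLIntegral_congr_fun_ae hms this]
    simp
  refine ⟨hγprob, hmap, by rw [hrelγ, hrelη], ?_⟩
  -- Step F : infimum
  refine le_antisymm (le_iInf fun γp => ?_) (iInf_le (fun γ : {γ : Measure Y // IsProbabilityMeasure γ ∧ γ.map ψ = η} => relEnt γ.1 γ₀) ⟨γ, hγprob, hmap⟩)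
  obtain ⟨γ', hγ'prob, hγ'map⟩ := γp
  show relEnt γ γ₀ ≤ relEnt γ' γ₀
  by_cases hc : γ' ≪ γ₀ ∧ Integrable (llr γ' γ₀) γ'
  swap
  · have : relEnt γ' γ₀ = ⊤ := by rw [relEnt, if_neg hc]
    rw [this]; exact le_top
  obtain ⟨hγ'ac, hγ'int⟩ := hc
  -- γ' ≪ γ
  have hγ'γ : γ' ≪ γ := by
    intro s hs
    set t := toMeasurable γ s with ht_def
    have htm : MeasurableSet t := measurableSet_toMeasurable _ _
    have ht0 : γ t = 0 := by rwa [measure_toMeasurable]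
    rw [hγ_def, withDensity_apply _ htm] at ht0
    have h0ae : (fun y => f (ψ y)) =ᵐ[γ₀.restrict t] 0 :=
      (lintegral_eq_zero_iff hfψ).mp ht0
    have hmeasA : MeasurableSet {y | f (ψ y) ≠ 0} :=
      (hfψ (measurableSet_singleton 0)).compl
    have h1 : γ₀ ({y | f (ψ y) ≠ 0} ∩ t) = 0 := by
      have h1' : γ₀.restrict t {y | f (ψ y) ≠ 0} = 0 := by
        have := ae_iff.mp h0ae
        simpa using this
      rwa [Measure.restrict_apply hmeasA] at h1'
    have h2 : γ' ({y | f (ψ y) ≠ 0} ∩ t) = 0 := hγ'ac h1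
    have hpre : γ' (ψ ⁻¹' {x | f x = 0}) = 0 := by
      have hmm : (γ'.map ψ) {x | f x = 0} = γ' (ψ ⁻¹' {x | f x = 0}) :=
        Measure.map_apply hψ (hf (measurableSet_singleton 0))
      rw [hγ'map, hfzero] at hmm
      exact hmm.symm
    have h3 : γ' ({y | f (ψ y) ≠ 0}ᶜ ∩ t) = 0 :=
      measure_mono_null (fun y hy => show f (ψ y) = 0 by simpa using hy.1) hpre
    have htz : γ' t = 0 := by
      have hle := measure_union_le (μ := γ') ({y | f (ψ y) ≠ 0} ∩ t) ({y | f (ψ y) ≠ 0}ᶜ ∩ t)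
      rw [← Set.union_inter_distrib_right, Set.union_compl_self, Set.univ_inter, h2, h3,
        add_zero] at hle
      exact le_antisymm hle zero_le
    exact measure_mono_null (subset_toMeasurable γ s) htz
  -- chain rule for llr along γ'
  have hgψint' : Integrable (fun y => g (ψ y)) γ' := (key γ' hγ'map).1
  have hllrγ₀γ' : llr γ γ₀ =ᵐ[γ'] fun y => g (ψ y) := hγ'ac.ae_le hllrγ₀
  have hllrγγ₀int : Integrable (llr γ γ₀) γ' := (integrable_congr hllrγ₀γ').mpr hgψint'
  have hmul : γ'.rnDeriv γ * γ.rnDeriv γ₀ =ᵐ[γ₀] γ'.rnDeriv γ₀ :=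
    Measure.rnDeriv_mul_rnDeriv hγ'γ
  have hpos1 : ∀ᵐ y ∂γ', 0 < γ'.rnDeriv γ y := Measure.rnDeriv_pos hγ'γ
  have hlt1 : ∀ᵐ y ∂γ', γ'.rnDeriv γ y < ∞ := hγ'γ.ae_le (Measure.rnDeriv_lt_top γ' γ)
  have hpos2 : ∀ᵐ y ∂γ', 0 < γ.rnDeriv γ₀ y := hγ'γ.ae_le (Measure.rnDeriv_pos hγ_ac)
  have hlt2 : ∀ᵐ y ∂γ', γ.rnDeriv γ₀ y < ∞ := hγ'ac.ae_le (Measure.rnDeriv_lt_top γ γ₀)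
  have hsplit : llr γ' γ₀ =ᵐ[γ'] llr γ' γ + llr γ γ₀ := by
    filter_upwards [hγ'ac.ae_le hmul, hpos1, hlt1, hpos2, hlt2] with y h1 h2 h3 h4 h5
    simp only [llr, Pi.add_apply]
    rw [← h1, Pi.mul_apply, ENNReal.toReal_mul, Real.log_mul]
    · exact ENNReal.toReal_ne_zero.mpr ⟨h2.ne', h3.ne⟩
    · exact ENNReal.toReal_ne_zero.mpr ⟨h4.ne', h5.ne⟩
  have hint1 : Integrable (llr γ' γ) γ' := by
    have hdiff : llr γ' γ =ᵐ[γ'] fun y => llr γ' γ₀ y - llr γ γ₀ y := by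
      filter_upwards [hsplit] with y hy
      simp only [Pi.add_apply] at hy
      linarith [hy]
    exact (integrable_congr hdiff).mpr (hγ'int.sub hllrγγ₀int)
  have hnn : 0 ≤ ∫ y, llr γ' γ y ∂γ' := my_integral_llr_nonneg hγ'γ hint1
  have heq : ∫ y, llr γ' γ₀ y ∂γ' =
      ∫ y, llr γ' γ y ∂γ' + ∫ x, llr η m x ∂η := by
    rw [integral_congr_ae hsplit]
    have : ∫ y, (llr γ' γ + llr γ γ₀) y ∂γ' = ∫ y, llr γ' γ y ∂γ' + ∫ y, llr γ γ₀ y ∂γ' :=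
      integral_add hint1 hllrγγ₀int
    rw [this, integral_congr_ae hllrγ₀γ', (key γ' hγ'map).2]
  rw [hrelγ, relEnt, if_pos ⟨hγ'ac, hγ'int⟩]
  rw [EReal.coe_le_coe_iff, heq]
  linarith
end

section
/- In the setting of the previous statement, for every θ ∈ P(R²), R(θ‖Ψ_{γ₀}(θ)) = R(θ‖γ₀) − F(θ), where F(θ) = ∫ f(θ,(y,ỹ)) dθ(y,ỹ) with f(θ,(y,ỹ)) = (y + m_b(θ))·ỹ − ½|y + m_b(θ)|², and F(θ) := −∞ if f(θ,·) is not θ-integrable; both sides equal ∞ when θ is not absolutely continuous with respect to Ψ_{γ₀}(θ). -/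
open MeasureTheory ProbabilityTheory Real Filter Topology
open scoped Classical ENNReal NNReal

/-- The bivariate standard normal distribution on `ℝ²`. -/
noncomputable def stdNormal2 : Measure (ℝ × ℝ) :=
  (ProbabilityTheory.gaussianReal 0 1).prod (ProbabilityTheory.gaussianReal 0 1)

/-- `m_b(θ) = ∫ b(x) dθ(x, x̃)`. -/
noncomputable def mB (b : ℝ → ℝ) (θ : Measure (ℝ × ℝ)) : ℝ := ∫ p, b p.1 ∂θ

/-- `f(θ,(y,ỹ)) = (y + m_b(θ))·ỹ − ½|y + m_b(θ)|²`. -/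
noncomputable def fToy (b : ℝ → ℝ) (θ : Measure (ℝ × ℝ)) (p : ℝ × ℝ) : ℝ :=
  (p.1 + mB b θ) * p.2 - |p.1 + mB b θ| ^ 2 / 2

/-- `F(θ) = ∫ f(θ,·) dθ` if `f(θ,·)` is `θ`-integrable, and `−∞` otherwise. -/
noncomputable def FToy (b : ℝ → ℝ) (θ : Measure (ℝ × ℝ)) : EReal :=
  if Integrable (fToy b θ) θ then ((∫ p, fToy b θ p ∂θ : ℝ) : EReal) else ⊥


-- Auxiliary lemmas

instance : IsProbabilityMeasure stdNormal2 := by unfold stdNormal2; infer_instance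

lemma gauss_shift (m : ℝ) :
    gaussianReal m 1 = (gaussianReal 0 1).withDensity
      (fun z => ENNReal.ofReal (Real.exp (m * z - m ^ 2 / 2))) := by
  rw [gaussianReal_of_var_ne_zero _ one_ne_zero, gaussianReal_of_var_ne_zero _ one_ne_zero,
    ← withDensity_mul _ (measurable_gaussianPDF _ _)
      (by fun_prop)]
  congr 1
  ext x
  simp only [Pi.mul_apply, gaussianPDF,
    ← ENNReal.ofReal_mul (gaussianPDFReal_nonneg _ _ _)]
  congr 1
  simp only [gaussianPDFReal, NNReal.coe_one, mul_one, sub_zero, ← Real.exp_add, mul_assoc]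
  congr 1
  ring

lemma map_shear (c : ℝ) :
    Measure.map (fun p : ℝ × ℝ => (p.1, p.1 + c + p.2)) stdNormal2
      = stdNormal2.withDensity
        (fun p => ENNReal.ofReal (Real.exp ((p.1 + c) * p.2 - (p.1 + c) ^ 2 / 2))) := by
  have hψ : Measurable (fun p : ℝ × ℝ => (p.1, p.1 + c + p.2)) := by fun_prop
  have hg : Measurable (fun p : ℝ × ℝ =>
      ENNReal.ofReal (Real.exp ((p.1 + c) * p.2 - (p.1 + c) ^ 2 / 2))) := by fun_prop
  ext s hs
  rw [Measure.map_apply hψ hs, withDensity_apply _ hs]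
  rw [stdNormal2, Measure.prod_apply (hψ hs)]
  rw [← lintegral_indicator hs _, lintegral_prod _ (hg.indicator hs).aemeasurable]
  congr 1
  ext y
  -- LHS inner: γ (section of preimage)
  have hsec : (fun z => (y, z)) ⁻¹' ((fun p : ℝ × ℝ => (p.1, p.1 + c + p.2)) ⁻¹' s)
      = (fun z => (y + c) + z) ⁻¹' ((fun z => (y, z)) ⁻¹' s) := by
    ext z; simp [add_assoc]
  rw [hsec]
  have hms : MeasurableSet ((fun z => (y, z)) ⁻¹' s) := measurable_prodMk_left hs
  have h1 : gaussianReal 0 1 ((fun z => (y + c) + z) ⁻¹' ((fun z => (y, z)) ⁻¹' s))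
      = gaussianReal (y + c) 1 ((fun z => (y, z)) ⁻¹' s) := by
    rw [← Measure.map_apply (by fun_prop) hms, gaussianReal_map_const_add, zero_add]
  rw [h1, gauss_shift (y + c), withDensity_apply _ hms]
  rw [← lintegral_indicator hms _]
  exact lintegral_congr fun z => by
    by_cases hz : (y, z) ∈ s
    · simp [Set.indicator_of_mem, hz, Set.mem_preimage.mpr hz]
    · simp [Set.indicator_of_notMem, hz]

lemma young_ineq (a b : ℝ) (ha : 0 ≤ a) : a * b ≤ a * Real.log a - a + Real.exp b := by
  rcases eq_or_lt_of_le ha with h | h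
  · simp only [← h, zero_mul, Real.log_zero, mul_zero, sub_zero, zero_sub, zero_add]
    positivity
  · have h1 := Real.add_one_le_exp (b - Real.log a)
    have h2 : a * (b - Real.log a + 1) ≤ a * Real.exp (b - Real.log a) := by nlinarith
    rw [Real.exp_sub, Real.exp_log h] at h2
    have h3 : a * (Real.exp b / a) = Real.exp b := by field_simp
    nlinarith

lemma dv_integrable {α : Type*} [MeasurableSpace α] {θ ν : Measure α} [IsFiniteMeasure θ]
    [SigmaFinite ν] (hac : θ ≪ ν) (hllr : Integrable (llr θ ν) θ) {h : α → ℝ}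
    (hm : Measurable h) (h0 : ∀ x, 0 ≤ h x)
    (hexp : Integrable (fun x => Real.exp (h x)) ν) : Integrable h θ := by
  refine ⟨hm.aestronglyMeasurable, ?_⟩
  rw [hasFiniteIntegral_iff_ofReal (ae_of_all _ h0)]
  have key : ∫⁻ x, ENNReal.ofReal (h x) ∂θ
      = ∫⁻ x, θ.rnDeriv ν x * ENNReal.ofReal (h x) ∂ν :=
    (MeasureTheory.lintegral_rnDeriv_mul hac hm.ennreal_ofReal.aemeasurable).symm
  rw [key]
  have hb : ∀ᵐ x ∂ν, θ.rnDeriv ν x * ENNReal.ofReal (h x)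
      ≤ ENNReal.ofReal ((θ.rnDeriv ν x).toReal * |Real.log (θ.rnDeriv ν x).toReal|)
        + ENNReal.ofReal (Real.exp (h x)) := by
    filter_upwards [Measure.rnDeriv_lt_top θ ν] with x hx
    set a := (θ.rnDeriv ν x).toReal with ha
    have h1 : θ.rnDeriv ν x = ENNReal.ofReal a := (ENNReal.ofReal_toReal hx.ne).symm
    rw [h1, ← ENNReal.ofReal_mul ENNReal.toReal_nonneg]
    refine le_trans (ENNReal.ofReal_le_ofReal ?_) ENNReal.ofReal_add_le
    have hy := young_ineq a (h x) ENNReal.toReal_nonneg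
    have h2 : a * Real.log a ≤ a * |Real.log a| := by
      have := le_abs_self (Real.log a)
      nlinarith [ENNReal.toReal_nonneg (a := θ.rnDeriv ν x)]
    have h3 : (0:ℝ) ≤ a := ENNReal.toReal_nonneg
    linarith
  refine lt_of_le_of_lt (lintegral_mono_ae hb) ?_
  have hmeas1 : Measurable fun x =>
      ENNReal.ofReal ((θ.rnDeriv ν x).toReal * |Real.log (θ.rnDeriv ν x).toReal|) := by
    have hmt := (Measure.measurable_rnDeriv θ ν).ennreal_toReal
    exact (hmt.mul (hmt.log.abs)).ennreal_ofReal
  rw [lintegral_add_left hmeas1]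
  refine ENNReal.add_lt_top.mpr ⟨?_, ?_⟩
  · have heq : ∀ᵐ x ∂ν,
        ENNReal.ofReal ((θ.rnDeriv ν x).toReal * |Real.log (θ.rnDeriv ν x).toReal|)
          = θ.rnDeriv ν x * ENNReal.ofReal |Real.log (θ.rnDeriv ν x).toReal| := by
      filter_upwards [Measure.rnDeriv_lt_top θ ν] with x hx
      rw [ENNReal.ofReal_mul ENNReal.toReal_nonneg, ENNReal.ofReal_toReal hx.ne]
    rw [lintegral_congr_ae heq,
      MeasureTheory.lintegral_rnDeriv_mul hac
        ((Measure.measurable_rnDeriv θ ν).ennreal_toReal.log.abs.ennreal_ofReal).aemeasurable]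
    have : ∀ x, ENNReal.ofReal |Real.log (θ.rnDeriv ν x).toReal| = ‖llr θ ν x‖₊ := by
      intro x
      rw [llr_def, ← Real.enorm_eq_ofReal (abs_nonneg _)]
      simp [Real.nnnorm_abs]
      rfl
    simp_rw [this]
    exact hllr.2
  · have : ∀ x, ENNReal.ofReal (Real.exp (h x)) = ‖Real.exp (h x)‖₊ :=
      fun x => (Real.enorm_eq_ofReal (Real.exp_nonneg _)).symm
    simp_rw [this]
    exact hexp.2

lemma gauss_exp_sq {a : ℝ} (ha : a < 1/2) :
    Integrable (fun x => Real.exp (a * x ^ 2)) (gaussianReal 0 1) := by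
  rw [gaussianReal_of_var_ne_zero _ one_ne_zero,
    integrable_withDensity_iff (measurable_gaussianPDF _ _)
      (ae_of_all _ fun x => ENNReal.ofReal_lt_top)]
  have heq : ∀ x : ℝ, Real.exp (a * x ^ 2) * (gaussianPDF 0 1 x).toReal
      = (Real.sqrt (2 * π))⁻¹ * Real.exp (-(1/2 - a) * x ^ 2) := by
    intro x
    rw [gaussianPDF, ENNReal.toReal_ofReal (gaussianPDFReal_nonneg _ _ _), gaussianPDFReal]
    simp only [NNReal.coe_one, mul_one, sub_zero]
    rw [mul_comm, mul_assoc, ← Real.exp_add]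
    congr 2
    ring
  simp_rw [heq]
  exact (integrable_exp_neg_mul_sq (by linarith)).const_mul _

lemma exp_abs_f_int (c : ℝ) :
    Integrable (fun p : ℝ × ℝ => Real.exp (|(p.1 + c) * p.2 - |p.1 + c| ^ 2 / 2| / 64))
      (Measure.map (fun p : ℝ × ℝ => (p.1, p.1 + c + p.2)) stdNormal2) := by
  have hψ : Measurable (fun p : ℝ × ℝ => (p.1, p.1 + c + p.2)) := by fun_prop
  have hgm : Measurable (fun p : ℝ × ℝ =>
      Real.exp (|(p.1 + c) * p.2 - |p.1 + c| ^ 2 / 2| / 64)) := by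
    apply Measurable.exp
    apply Measurable.div_const
    apply Measurable.abs
    exact ((measurable_fst.add_const c).mul measurable_snd).sub
      (((measurable_fst.add_const c).abs.pow_const 2).div_const 2)
  rw [integrable_map_measure hgm.aestronglyMeasurable hψ.aemeasurable]
  have hdom : Integrable (fun p : ℝ × ℝ => Real.exp (3 * c ^ 2 / 64) *
      (Real.exp ((3 / 64) * p.1 ^ 2) * Real.exp ((1 / 128) * p.2 ^ 2))) stdNormal2 := by
    exact ((gauss_exp_sq (by norm_num)).mul_prod (gauss_exp_sq (by norm_num))).const_mul _
  refine hdom.mono' (hgm.comp hψ).aestronglyMeasurable (ae_of_all _ fun p => ?_)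
  simp only [Function.comp]
  rw [Real.norm_eq_abs, abs_of_nonneg (Real.exp_nonneg _), ← Real.exp_add, ← Real.exp_add]
  apply Real.exp_le_exp.mpr
  set y := p.1; set z := p.2; set a := y + c with hadef
  have h1 : (a * (y + c + z) - |a| ^ 2 / 2) = a ^ 2 / 2 + a * z := by
    rw [sq_abs]; ring
  rw [h1]
  have h2 : |a ^ 2 / 2 + a * z| ≤ a ^ 2 / 2 + |a| * |z| := by
    refine (abs_add_le _ _).trans ?_
    rw [abs_mul]
    gcongr
    · exact le_of_eq (abs_of_nonneg (by positivity))
  have h3 : |a| * |z| ≤ (a ^ 2 + z ^ 2) / 2 := by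
    nlinarith [sq_nonneg (|a| - |z|), sq_abs a, sq_abs z]
  have h4 : a ^ 2 ≤ 2 * y ^ 2 + 2 * c ^ 2 := by rw [hadef]; nlinarith [sq_nonneg (y - c)]
  nlinarith


/-- `R(θ ‖ Ψ_{γ₀}(θ)) = R(θ ‖ γ₀) − F(θ)`; in particular both sides are `∞` when `θ` is not
absolutely continuous with respect to `Ψ_{γ₀}(θ)`. -/
theorem stmt7 (b : ℝ → ℝ) (hb : Measurable b) (C : ℝ) (hbd : ∀ x, |b x| ≤ C)
    (θ : Measure (ℝ × ℝ)) [IsProbabilityMeasure θ] :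
    relEnt θ (Measure.map (fun p : ℝ × ℝ => (p.1, p.1 + mB b θ + p.2)) stdNormal2) =
      relEnt θ stdNormal2 - FToy b θ ∧
    (¬ θ ≪ Measure.map (fun p : ℝ × ℝ => (p.1, p.1 + mB b θ + p.2)) stdNormal2 →
      relEnt θ (Measure.map (fun p : ℝ × ℝ => (p.1, p.1 + mB b θ + p.2)) stdNormal2) = ⊤ ∧
      relEnt θ stdNormal2 = ⊤) := by
  set c := mB b θ with hc
  set f := fToy b θ with hfdef
  have hfeq : f = fun p : ℝ × ℝ => (p.1 + c) * p.2 - (p.1 + c) ^ 2 / 2 := by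
    funext p; simp only [hfdef, fToy, ← hc, sq_abs]
  have hψ : Measurable (fun p : ℝ × ℝ => (p.1, p.1 + c + p.2)) := by fun_prop
  have hfm : Measurable f := by rw [hfeq]; fun_prop
  set ν := Measure.map (fun p : ℝ × ℝ => (p.1, p.1 + c + p.2)) stdNormal2 with hν
  haveI : IsProbabilityMeasure ν := Measure.isProbabilityMeasure_map hψ.aemeasurable
  have hνd : ν = stdNormal2.withDensity (fun p => ENNReal.ofReal (Real.exp (f p))) := by
    rw [hν, map_shear c, hfeq]
  have hlint : ∫⁻ p, ENNReal.ofReal (Real.exp (f p)) ∂stdNormal2 = 1 := by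
    have h1 : ν Set.univ = 1 := measure_univ
    rw [hνd, withDensity_apply _ MeasurableSet.univ, Measure.restrict_univ] at h1
    exact h1
  have hexpf : Integrable (fun x => Real.exp (f x)) stdNormal2 := by
    refine ⟨(Real.measurable_exp.comp hfm).aestronglyMeasurable, ?_⟩
    rw [hasFiniteIntegral_iff_ofReal (ae_of_all _ fun x => Real.exp_nonneg _)]
    rw [hlint]; exact ENNReal.one_lt_top
  have hIexp : ∫ x, Real.exp (f x) ∂stdNormal2 = 1 := by
    rw [integral_eq_lintegral_of_nonneg_ae (ae_of_all _ fun x => Real.exp_nonneg _)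
      (Real.measurable_exp.comp hfm).aestronglyMeasurable, hlint, ENNReal.toReal_one]
  have htilt : ν = stdNormal2.tilted f := by
    rw [hνd, Measure.tilted, hIexp]
    simp only [div_one]
  have hac_iff : θ ≪ ν ↔ θ ≪ stdNormal2 := by
    constructor
    · intro h; exact h.trans (htilt ▸ tilted_absolutelyContinuous stdNormal2 f)
    · intro h; exact h.trans (htilt ▸ absolutelyContinuous_tilted hexpf)
  by_cases hac : θ ≪ stdNormal2
  · have hacν : θ ≪ ν := hac_iff.mpr hac
    by_cases hI1 : Integrable (llr θ ν) θ
    · -- f is integrable via DV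
      have habs : Integrable (fun p => |f p| / 64) θ := by
        refine dv_integrable hacν hI1 ((hfm.abs).div_const 64)
          (fun x => by positivity) ?_
        have h := exp_abs_f_int c
        rw [← hν] at h
        have heq2 : (fun p : ℝ × ℝ => Real.exp (|f p| / 64))
            = fun p : ℝ × ℝ => Real.exp (|(p.1 + c) * p.2 - |p.1 + c| ^ 2 / 2| / 64) := by
          funext p; rw [hfdef]; rfl
        rw [heq2]; exact h
      have hIf : Integrable f θ := by
        have h64 : Integrable (fun p => |f p|) θ := by
          have h := habs.const_mul 64
          have : (fun p => 64 * (|f p| / 64)) = fun p => |f p| := by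
            funext p; ring
          rwa [this] at h
        refine (integrable_norm_iff hfm.aestronglyMeasurable).mp ?_
        simpa only [Real.norm_eq_abs] using h64
      have hllreq : llr θ stdNormal2 =ᵐ[θ] fun x => llr θ ν x + f x := by
        have h := llr_tilted_right hac hexpf (f := f)
        rw [← htilt, hIexp, Real.log_one] at h
        filter_upwards [h] with x hx
        rw [hx]; ring
      have hI0 : Integrable (llr θ stdNormal2) θ :=
        (integrable_congr hllreq).mpr (hI1.add hIf)
      have hval : ∫ x, llr θ ν x ∂θ = ∫ x, llr θ stdNormal2 x ∂θ - ∫ x, f x ∂θ := by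
        rw [htilt, integral_llr_tilted_right hac hIf hexpf hI0, hIexp, Real.log_one, add_zero]
      refine ⟨?_, fun hcon => absurd hacν hcon⟩
      unfold relEnt FToy
      rw [if_pos ⟨hacν, hI1⟩, if_pos ⟨hac, hI0⟩, if_pos (hfdef ▸ hIf), hval]
      rw [← hfdef, ← EReal.coe_sub]
    · have hLHS : relEnt θ ν = ⊤ := by
        unfold relEnt; rw [if_neg (fun h => hI1 h.2)]
      refine ⟨?_, fun hcon => absurd hacν hcon⟩
      by_cases hIf : Integrable f θ
      · have hI0 : ¬ Integrable (llr θ stdNormal2) θ := by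
          intro h
          exact hI1 (htilt ▸ integrable_llr_tilted_right hac hIf h hexpf)
        rw [hLHS]
        unfold relEnt FToy
        rw [if_neg (fun h => hI0 h.2), if_pos (hfdef ▸ hIf)]
        exact (EReal.top_sub_coe _).symm
      · rw [hLHS]
        unfold FToy
        rw [if_neg (hfdef ▸ hIf)]
        have hne : relEnt θ stdNormal2 ≠ ⊥ := by
          unfold relEnt; split_ifs
          · exact EReal.coe_ne_bot _
          · simp
        exact (EReal.sub_bot hne).symm
  · have hacν : ¬ θ ≪ ν := fun h => hac (hac_iff.mp h)
    have hL : relEnt θ ν = ⊤ := by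
      unfold relEnt; rw [if_neg (fun h => hacν h.1)]
    have hR : relEnt θ stdNormal2 = ⊤ := by
      unfold relEnt; rw [if_neg (fun h => hac h.1)]
    refine ⟨?_, fun _ => ⟨hL, hR⟩⟩
    rw [hL, hR]
    unfold FToy
    split_ifs
    · exact (EReal.top_sub_coe _).symm
    · exact EReal.top_sub_bot.symm
end

section
/- Under assumptions (A1)–(A3) of the noise-based setup, the rate function I(η) = inf{ R(γ‖γ₀) : γ ∈ D, μ*(γ) = η } satisfies I(η) = R(η‖Ψ_{γ₀}(η)) for every η ∈ P(X), where Ψ_{γ₀}(η) = γ₀ ∘ ψ(η,·)⁻¹. -/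
open MeasureTheory ProbabilityTheory Real Filter Topology
open scoped Classical ENNReal NNReal

/-- The empirical (probability) measure of `N+1` points. -/
noncomputable def empir {Z : Type*} [MeasurableSpace Z] {N : ℕ} (y : Fin (N + 1) → Z) :
    ProbabilityMeasure Z :=
  ⟨(((N : ℝ≥0∞) + 1))⁻¹ • ∑ i : Fin (N + 1), Measure.dirac (y i), by
    constructor
    simp only [Measure.smul_apply, Measure.coe_finset_sum, Finset.sum_apply,
      measure_univ, Finset.sum_const, Finset.card_univ, Fintype.card_fin, nsmul_eq_mul,
      mul_one, smul_eq_mul]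
    push_cast
    rw [ENNReal.inv_mul_cancel] <;> simp⟩


section aux
set_option linter.unusedSectionVars false
section core


variable {α : Type*} [MeasurableSpace α] {ν μ : Measure α}

lemma myIntExpNeg [SigmaFinite ν] [IsFiniteMeasure μ] (h : ν ≪ μ) :
    Integrable (fun x => exp (-llr ν μ x)) ν :=
  Measure.integrable_toReal_rnDeriv.congr (exp_neg_llr h).symm

lemma myIntNegPart [SigmaFinite ν] [IsFiniteMeasure μ] (h : ν ≪ μ) :
    Integrable (fun x => max (-llr ν μ x) 0) ν := by
  refine (myIntExpNeg h).mono
    (((measurable_llr _ _).neg.max measurable_const).aestronglyMeasurable) (ae_of_all _ ?_)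
  intro x
  rw [Real.norm_eq_abs, Real.norm_eq_abs, abs_of_nonneg (le_max_right _ _),
    abs_of_nonneg (exp_nonneg _)]
  rcases le_or_gt (-llr ν μ x) 0 with h0 | h0
  · exact le_trans (max_le h0 le_rfl) (exp_nonneg _)
  · rw [max_eq_left h0.le]
    linarith [Real.add_one_le_exp (-llr ν μ x)]

lemma myLlrNonneg [IsProbabilityMeasure ν] [IsProbabilityMeasure μ] (h : ν ≪ μ)
    (hint : Integrable (llr ν μ) ν) : 0 ≤ ∫ x, llr ν μ x ∂ν := by
  have h1 : ∫ x, -llr ν μ x ∂ν ≤ ∫ x, (exp (-llr ν μ x) - 1) ∂ν := by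
    refine integral_mono_ae hint.neg ((myIntExpNeg h).sub (integrable_const 1)) (ae_of_all _ ?_)
    intro x
    show -llr ν μ x ≤ exp (-llr ν μ x) - 1
    linarith [Real.add_one_le_exp (-llr ν μ x)]
  have h2 : ∫ x, (exp (-llr ν μ x) - 1) ∂ν = (∫ x, exp (-llr ν μ x) ∂ν) - 1 := by
    rw [integral_sub (myIntExpNeg h) (integrable_const 1), integral_const]
    simp
  have h3 : ∫ x, exp (-llr ν μ x) ∂ν ≤ 1 := by
    rw [integral_congr_ae (exp_neg_llr h)]
    calc ∫ x, (μ.rnDeriv ν x).toReal ∂ν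
        = ∫ x in Set.univ, (μ.rnDeriv ν x).toReal ∂ν := by rw [setIntegral_univ]
      _ ≤ (μ Set.univ).toReal := Measure.setIntegral_toReal_rnDeriv_le (measure_ne_top _ _)
      _ = 1 := by simp
  rw [integral_neg] at h1
  linarith

variable {Y X : Type*} [MeasurableSpace Y] [MeasurableSpace X]
  {γ₀ : Measure Y} [IsProbabilityMeasure γ₀] {f : Y → X} {η : Measure X}
  [IsProbabilityMeasure η]

lemma myTilt_map (hf : Measurable f) (hac : η ≪ Measure.map f γ₀) :
    Measure.map f (γ₀.withDensity fun y => η.rnDeriv (Measure.map f γ₀) (f y)) = η := by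
  set κ := Measure.map f γ₀
  have hg : Measurable (η.rnDeriv κ) := Measure.measurable_rnDeriv _ _
  refine Measure.ext fun A hA => ?_
  rw [Measure.map_apply hf hA, withDensity_apply _ (hf hA),
    ← setLIntegral_map hA hg hf, Measure.setLIntegral_rnDeriv hac]

lemma myTilt_prob (hf : Measurable f) (hac : η ≪ Measure.map f γ₀) :
    IsProbabilityMeasure (γ₀.withDensity fun y => η.rnDeriv (Measure.map f γ₀) (f y)) := by
  constructor
  have h := myTilt_map hf hac
  rw [show (Set.univ : Set Y) = f ⁻¹' Set.univ from rfl,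
    ← Measure.map_apply hf MeasurableSet.univ, h]
  simp

lemma myTilt_null (hf : Measurable f) (hac : η ≪ Measure.map f γ₀)
    {γ : Measure Y} (hγ : Measure.map f γ = η) :
    γ {y | η.rnDeriv (Measure.map f γ₀) (f y) = 0} = 0 := by
  set κ := Measure.map f γ₀
  have hg : Measurable (η.rnDeriv κ) := Measure.measurable_rnDeriv _ _
  have hs : MeasurableSet {x | η.rnDeriv κ x = 0} := hg (measurableSet_singleton 0)
  have h1 : {y | η.rnDeriv κ (f y) = 0} = f ⁻¹' {x | η.rnDeriv κ x = 0} := rfl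
  have h2 : η {x | η.rnDeriv κ x = 0} = 0 := by
    set s := {x | η.rnDeriv κ x = 0} with hs_def
    conv_lhs => rw [← Measure.withDensity_rnDeriv_eq _ _ hac]
    rw [withDensity_apply _ hs,
      setLIntegral_congr_fun hs (fun x hx => hx)]
    simp
  rw [h1, ← Measure.map_apply hf hs, hγ]
  exact h2

lemma myTilt_llr (hf : Measurable f) (hac : η ≪ Measure.map f γ₀) :
    llr (γ₀.withDensity fun y => η.rnDeriv (Measure.map f γ₀) (f y)) γ₀
      =ᵐ[γ₀] fun y => llr η (Measure.map f γ₀) (f y) := by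
  set κ := Measure.map f γ₀
  have hg : Measurable (η.rnDeriv κ) := Measure.measurable_rnDeriv _ _
  filter_upwards [Measure.rnDeriv_withDensity (f := fun y => η.rnDeriv κ (f y)) γ₀
    (hg.comp hf)] with y hy
  rw [llr, hy]
  rfl

end core


variable {Y X : Type*} [MeasurableSpace Y] [MeasurableSpace X]
  {γ₀ : Measure Y} [IsProbabilityMeasure γ₀] {f : Y → X}

set_option linter.unusedSectionVars false

/-- Tilting construction: attains the pushed-forward relative entropy. -/
lemma myTilt_relEnt (hf : Measurable f) {η : Measure X} [IsProbabilityMeasure η]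
    (hac : η ≪ Measure.map f γ₀) (hint : Integrable (llr η (Measure.map f γ₀)) η) :
    ∃ γ : Measure Y, IsProbabilityMeasure γ ∧ Measure.map f γ = η ∧
      relEnt γ γ₀ = relEnt η (Measure.map f γ₀) := by
  classical
  set κ := Measure.map f γ₀ with hκ
  set γ := γ₀.withDensity fun y => η.rnDeriv κ (f y) with hγdef
  have hmapγ : Measure.map f γ = η := myTilt_map hf hac
  haveI hPγ : IsProbabilityMeasure γ := myTilt_prob hf hac
  have hγac : γ ≪ γ₀ := withDensity_absolutelyContinuous _ _
  have hllr : llr γ γ₀ =ᵐ[γ] fun y => llr η κ (f y) := hγac.ae_le (myTilt_llr hf hac)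
  have hmeasllr : AEStronglyMeasurable (llr η κ) (Measure.map f γ) :=
    (stronglyMeasurable_llr _ _).aestronglyMeasurable
  have hint' : Integrable (fun y => llr η κ (f y)) γ := by
    have := (integrable_map_measure hmeasllr hf.aemeasurable).mp (hmapγ ▸ hint)
    exact this
  have hintγ : Integrable (llr γ γ₀) γ := hint'.congr hllr.symm
  have hival : ∫ y, llr γ γ₀ y ∂γ = ∫ x, llr η κ x ∂η := by
    rw [integral_congr_ae hllr, ← integral_map hf.aemeasurable hmeasllr, hmapγ]
  refine ⟨γ, hPγ, hmapγ, ?_⟩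
  rw [relEnt, relEnt, if_pos ⟨hγac, hintγ⟩, if_pos ⟨hac, hint⟩, hival]

/-- Data processing inequality for `relEnt`. -/
lemma myDPI {γ : Measure Y} [IsProbabilityMeasure γ] (hf : Measurable f)
    (hγac : γ ≪ γ₀) (hint : Integrable (llr γ γ₀) γ) :
    Measure.map f γ ≪ Measure.map f γ₀ ∧
      Integrable (llr (Measure.map f γ) (Measure.map f γ₀)) (Measure.map f γ) ∧
      ∫ x, llr (Measure.map f γ) (Measure.map f γ₀) x ∂(Measure.map f γ) ≤
        ∫ y, llr γ γ₀ y ∂γ := by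
  classical
  set κ := Measure.map f γ₀ with hκ
  set η := Measure.map f γ with hη
  haveI : IsProbabilityMeasure κ := Measure.isProbabilityMeasure_map hf.aemeasurable
  haveI : IsProbabilityMeasure η := Measure.isProbabilityMeasure_map hf.aemeasurable
  have hac : η ≪ κ := hγac.map hf
  set g := η.rnDeriv κ with hg_def
  have hg : Measurable g := Measure.measurable_rnDeriv _ _
  set γ' := γ₀.withDensity fun y => g (f y) with hγ'def
  haveI hPγ' : IsProbabilityMeasure γ' := myTilt_prob hf hac
  have hnull : γ {y | g (f y) = 0} = 0 := myTilt_null hf hac rfl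
  -- γ ≪ γ'
  have hγγ' : γ ≪ γ' := by
    refine Measure.AbsolutelyContinuous.mk fun s hs hs0 => ?_
    rw [hγ'def, withDensity_apply _ hs] at hs0
    have hae : ∀ᵐ y ∂γ₀, y ∈ s → g (f y) = 0 :=
      (setLIntegral_eq_zero_iff hs (hg.comp hf)).mp hs0
    have h1 : γ {y | ¬(y ∈ s → g (f y) = 0)} = 0 := hγac (ae_iff.mp hae)
    have hsub : s ⊆ {y | ¬(y ∈ s → g (f y) = 0)} ∪ {y | g (f y) = 0} := by
      intro y hy
      by_cases h0 : g (f y) = 0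
      · exact Or.inr h0
      · exact Or.inl fun h => h0 (h hy)
    exact measure_mono_null hsub (measure_union_null h1 hnull)
  -- a.e. decomposition of llr
  have hb : γ'.rnDeriv γ₀ =ᵐ[γ₀] fun y => g (f y) :=
    Measure.rnDeriv_withDensity (f := fun y => g (f y)) γ₀ (hg.comp hf)
  have hb' : ∀ᵐ y ∂γ, γ'.rnDeriv γ₀ y = g (f y) := hγac.ae_le hb
  have hbpos : ∀ᵐ y ∂γ, g (f y) ≠ 0 := by
    rw [ae_iff]
    simpa using hnull
  have hbfin : ∀ᵐ y ∂γ, γ'.rnDeriv γ₀ y < ∞ :=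
    (Measure.rnDeriv_lt_top γ' γ₀).filter_mono hγac.ae_le
  have hapos : ∀ᵐ y ∂γ, 0 < γ.rnDeriv γ' y := Measure.rnDeriv_pos hγγ'
  have hafin : ∀ᵐ y ∂γ, γ.rnDeriv γ' y < ∞ :=
    (Measure.rnDeriv_lt_top γ γ').filter_mono hγγ'.ae_le
  have hchain : γ.rnDeriv γ' * γ'.rnDeriv γ₀ =ᵐ[γ] γ.rnDeriv γ₀ :=
    hγac.ae_le (Measure.rnDeriv_mul_rnDeriv hγγ')
  have hdecomp : ∀ᵐ y ∂γ, llr γ γ₀ y = llr γ γ' y + llr η κ (f y) := by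
    filter_upwards [hb', hbpos, hbfin, hapos, hafin, hchain] with y h1 h2 h3 h4 h5 h6
    have ha0 : (γ.rnDeriv γ' y).toReal ≠ 0 := (ENNReal.toReal_pos h4.ne' h5.ne).ne'
    have hb0 : (γ'.rnDeriv γ₀ y).toReal ≠ 0 :=
      (ENNReal.toReal_pos (by rw [h1]; exact h2) h3.ne).ne'
    simp only [llr]
    rw [← h6, Pi.mul_apply, ENNReal.toReal_mul, Real.log_mul ha0 hb0, h1]
  -- integrability
  have hmeas : AEStronglyMeasurable (llr η κ) η := (stronglyMeasurable_llr _ _).aestronglyMeasurable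
  have hmeasmax : AEStronglyMeasurable (fun x => max (-llr η κ x) 0) η :=
    ((measurable_llr _ _).neg.max measurable_const).aestronglyMeasurable
  have hneg1 : Integrable (fun y => max (-llr γ γ' y) 0) γ := myIntNegPart hγγ'
  have hneg2 : Integrable (fun y => max (-llr η κ (f y)) 0) γ := by
    have h := (integrable_map_measure hmeasmax hf.aemeasurable).mp (myIntNegPart hac)
    exact h
  have hpos1 : Integrable (fun y => max (llr γ γ' y) 0) γ := by
    refine (hint.abs.add hneg2).mono
      (((measurable_llr _ _).max measurable_const).aestronglyMeasurable) ?_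
    filter_upwards [hdecomp] with y hy
    simp only [Pi.add_apply]
    rw [Real.norm_eq_abs, Real.norm_eq_abs, abs_of_nonneg (le_max_right _ _),
      abs_of_nonneg (add_nonneg (abs_nonneg _) (le_max_right _ _))]
    rcases le_or_gt (llr γ γ' y) 0 with h0 | h0
    · rw [max_eq_right h0]
      exact add_nonneg (abs_nonneg _) (le_max_right _ _)
    · rw [max_eq_left h0.le]
      have h2 : -llr η κ (f y) ≤ max (-llr η κ (f y)) 0 := le_max_left _ _
      have h3 : llr γ γ₀ y ≤ |llr γ γ₀ y| := le_abs_self _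
      linarith
  have hint1 : Integrable (llr γ γ') γ :=
    (hpos1.sub hneg1).congr (ae_of_all _ fun y => max_zero_sub_max_neg_zero_eq_self _)
  have hint2 : Integrable (fun y => llr η κ (f y)) γ := by
    refine (hint.sub hint1).congr ?_
    filter_upwards [hdecomp] with y hy
    simp only [Pi.sub_apply]
    linarith
  have hintη : Integrable (llr η κ) η :=
    (integrable_map_measure hmeas hf.aemeasurable).mpr hint2
  refine ⟨hac, hintη, ?_⟩
  have hI : ∫ x, llr η κ x ∂η = ∫ y, llr η κ (f y) ∂γ := by
    rw [hη, integral_map hf.aemeasurable hmeas]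
  have hsplit : ∫ y, llr γ γ₀ y ∂γ = (∫ y, llr γ γ' y ∂γ) + ∫ y, llr η κ (f y) ∂γ := by
    rw [← integral_add hint1 hint2]
    exact integral_congr_ae hdecomp
  have h0 : 0 ≤ ∫ y, llr γ γ' y ∂γ := myLlrNonneg hγγ' hint1
  rw [hI]
  linarith


lemma myDPI_relEnt {Y X : Type*} [MeasurableSpace Y] [MeasurableSpace X]
    {γ₀ γ : Measure Y} [IsProbabilityMeasure γ₀] [IsProbabilityMeasure γ]
    {f : Y → X} (hf : Measurable f) :
    relEnt (Measure.map f γ) (Measure.map f γ₀) ≤ relEnt γ γ₀ := by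
  by_cases h : γ ≪ γ₀ ∧ Integrable (llr γ γ₀) γ
  · obtain ⟨hac, hintη, hle⟩ := myDPI hf h.1 h.2
    rw [relEnt, relEnt, if_pos ⟨hac, hintη⟩, if_pos h]
    exact_mod_cast hle
  · have h2 : relEnt γ γ₀ = ⊤ := by rw [relEnt, if_neg h]
    rw [h2]
    exact le_top

end aux

/-- Under (A1)–(A3) of the noise-based setup, the rate function
`I(η) = inf { R(γ ‖ γ₀) : γ ∈ D, μ*(γ) = η }` has the relative entropy form
`I(η) = R(η ‖ Ψ_{γ₀}(η))`, where `Ψ_{γ₀}(η) = γ₀ ∘ ψ(η,·)⁻¹`. -/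
theorem stmt10 {X Y : Type*}
    [MeasurableSpace X] [TopologicalSpace X] [PolishSpace X] [BorelSpace X]
    [MeasurableSpace Y] [TopologicalSpace Y] [PolishSpace Y] [BorelSpace Y]
    [MeasurableSpace (ProbabilityMeasure X)] [BorelSpace (ProbabilityMeasure X)]
    [MeasurableSpace (ProbabilityMeasure Y)] [BorelSpace (ProbabilityMeasure Y)]
    (γ₀ : ProbabilityMeasure Y)
    (ψ : ProbabilityMeasure X → Y → X) (hψ : Measurable (Function.uncurry ψ))
    (D : Set (ProbabilityMeasure Y)) (hD : MeasurableSet D)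
    (μstar : ProbabilityMeasure Y → ProbabilityMeasure X)
    (hA1 : ∀ γ ∈ D,
      Measure.map (ψ (μstar γ)) (γ : Measure Y) = (μstar γ : Measure X) ∧
      ∀ μ : ProbabilityMeasure X,
        Measure.map (ψ μ) (γ : Measure Y) = (μ : Measure X) → μ = μstar γ)
    (hA1meas : Measurable fun γ : D => μstar (γ : ProbabilityMeasure Y))
    (hA2 : ∀ N : ℕ,
      Measure.pi (fun _ : Fin (N + 1) => (γ₀ : Measure Y))
        {y : Fin (N + 1) → Y | empir y ∈ D} = 1)
    (hA3 : ∀ γ : ProbabilityMeasure Y, relEnt (γ : Measure Y) (γ₀ : Measure Y) < ⊤ →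
      γ ∈ D ∧ ContinuousWithinAt μstar D γ) :
    ∀ η : ProbabilityMeasure X,
      (⨅ γ : {γ : ProbabilityMeasure Y // γ ∈ D ∧ μstar γ = η},
        relEnt (γ.1 : Measure Y) (γ₀ : Measure Y)) =
      relEnt (η : Measure X) (Measure.map (ψ η) (γ₀ : Measure Y)) := by
  intro η
  have hfm : Measurable (ψ η) := hψ.comp (measurable_const.prodMk measurable_id)
  refine le_antisymm ?_ (le_iInf ?_)
  · by_cases htop : relEnt (η : Measure X) (Measure.map (ψ η) (γ₀ : Measure Y)) = ⊤
    · rw [htop]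
      exact le_top
    · have hc : (η : Measure X) ≪ Measure.map (ψ η) (γ₀ : Measure Y) ∧
          Integrable (llr (η : Measure X) (Measure.map (ψ η) (γ₀ : Measure Y))) η := by
        by_contra hc
        rw [relEnt, if_neg hc] at htop
        exact htop rfl
      obtain ⟨γm, hPγ, hmap, hre⟩ := myTilt_relEnt hfm hc.1 hc.2
      set γp : ProbabilityMeasure Y := ⟨γm, hPγ⟩ with hγp
      have hlt : relEnt (γp : Measure Y) (γ₀ : Measure Y) < ⊤ := by
        rw [show (γp : Measure Y) = γm from rfl, hre]
        exact lt_top_iff_ne_top.mpr htop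
      have hD : γp ∈ D := (hA3 γp hlt).1
      have hμ : μstar γp = η := ((hA1 γp hD).2 η hmap).symm
      refine le_trans (iInf_le _ ⟨γp, hD, hμ⟩) (le_of_eq ?_)
      exact hre
  · rintro ⟨γ, hγD, hγη⟩
    have hmap : Measure.map (ψ η) (γ : Measure Y) = (η : Measure X) := by
      have h := (hA1 γ hγD).1
      rw [hγη] at h
      exact h
    calc relEnt (η : Measure X) (Measure.map (ψ η) (γ₀ : Measure Y))
        = relEnt (Measure.map (ψ η) (γ : Measure Y)) (Measure.map (ψ η) (γ₀ : Measure Y)) := by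
          rw [hmap]
      _ ≤ relEnt (γ : Measure Y) (γ₀ : Measure Y) := myDPI_relEnt hfm
end

section
/- Consider the toy model: γ₀ the bivariate standard normal law, b ∈ C_b(R), m_b(θ) = ∫ b(x) dθ(x,x̃), ψ(θ,(y,ỹ)) = (y, y + m_b(θ) + ỹ), Ψ_γ(μ) = γ ∘ ψ(μ,·)⁻¹. Then for every γ ∈ P(R²), the fixed point equation μ = Ψ_γ(μ) has the unique solution μ*(γ) = Ψ_γ(γ), and the map γ ↦ Ψ_γ(γ) is continuous on P(R²) with the weak topology. -/
open MeasureTheory ProbabilityTheory Real Filter Topology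
open scoped Classical ENNReal NNReal
open Metric
open scoped BoundedContinuousFunction

lemma psi_cont (c : ℝ) : Continuous (fun p : ℝ × ℝ => (p.1, p.1 + c + p.2)) := by fun_prop

lemma mB_map (b : ℝ → ℝ) (hb : Continuous b) (c : ℝ) (γ : Measure (ℝ × ℝ)) :
    mB b (Measure.map (fun p : ℝ × ℝ => (p.1, p.1 + c + p.2)) γ) = mB b γ := by
  unfold mB
  rw [MeasureTheory.integral_map (φ := fun p : ℝ × ℝ => (p.1, p.1 + c + p.2))
    (f := fun p : ℝ × ℝ => b p.1) ((psi_cont c).measurable.aemeasurable)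
    ((hb.comp continuous_fst).aestronglyMeasurable)]

lemma lp_translate (ν : Measure (ℝ × ℝ)) [IsProbabilityMeasure ν] (d : ℝ) :
    levyProkhorovDist (Measure.map (fun q : ℝ × ℝ => (q.1, q.2 + d)) ν) ν ≤ |d| := by
  have hT : Measurable (fun q : ℝ × ℝ => (q.1, q.2 + d)) := by fun_prop
  haveI : IsProbabilityMeasure (Measure.map (fun q : ℝ × ℝ => (q.1, q.2 + d)) ν) :=
    Measure.isProbabilityMeasure_map hT.aemeasurable
  apply levyProkhorovDist_le_of_forall_le _ _ (abs_nonneg d)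
  intro ε B hε B_mble
  rw [Measure.map_apply hT B_mble]
  refine le_trans (measure_mono ?_) (le_add_right le_rfl)
  intro q hq
  rw [Metric.mem_thickening_iff]
  refine ⟨(q.1, q.2 + d), hq, ?_⟩
  rw [Prod.dist_eq]
  simp only [dist_self]
  have hd : dist q.2 (q.2 + d) = |d| := by
    rw [Real.dist_eq]; ring_nf; rw [abs_neg]
  rw [hd, max_lt_iff]
  exact ⟨lt_of_le_of_lt (abs_nonneg d) hε, hε⟩

/-- Toy model: `ψ(θ,(y,ỹ)) = (y, y + m_b(θ) + ỹ)` and `Ψ_γ(μ) = γ ∘ ψ(μ,·)⁻¹`. For every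
probability measure `γ` on `ℝ²`, the fixed point equation `μ = Ψ_γ(μ)` has the unique solution
`μ*(γ) = Ψ_γ(γ)`, and `γ ↦ Ψ_γ(γ)` is continuous for the weak topology. -/
theorem stmt11 (b : ℝ → ℝ) (hb : Continuous b) (C : ℝ) (hbd : ∀ x, |b x| ≤ C)
    (hae : ∀ γ : ProbabilityMeasure (ℝ × ℝ),
      AEMeasurable (fun p : ℝ × ℝ => (p.1, p.1 + mB b (γ : Measure (ℝ × ℝ)) + p.2))
        (γ : Measure (ℝ × ℝ))) :
    (∀ γ : Measure (ℝ × ℝ), IsProbabilityMeasure γ →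
      ∀ μ : Measure (ℝ × ℝ), IsProbabilityMeasure μ →
        (Measure.map (fun p : ℝ × ℝ => (p.1, p.1 + mB b μ + p.2)) γ = μ ↔
          μ = Measure.map (fun p : ℝ × ℝ => (p.1, p.1 + mB b γ + p.2)) γ)) ∧
    Continuous (fun γ : ProbabilityMeasure (ℝ × ℝ) => γ.map (hae γ)) := by
  constructor
  · intro γ hγ μ hμ
    constructor
    · intro h
      have hm : mB b μ = mB b γ := by
        conv_lhs => rw [← h]
        exact mB_map b hb _ γ
      rw [← hm]
      exact h.symm
    · intro h
      have hm : mB b μ = mB b γ := by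
        rw [h]; exact mB_map b hb _ γ
      rw [hm]
      exact h.symm
  · rw [continuous_iff_continuousAt]
    intro γ₀
    set F : ProbabilityMeasure (ℝ × ℝ) → ProbabilityMeasure (ℝ × ℝ) :=
      fun γ => γ.map (hae γ) with hF
    set c₀ : ℝ := mB b (γ₀ : Measure (ℝ × ℝ)) with hc₀
    set G : ProbabilityMeasure (ℝ × ℝ) → ProbabilityMeasure (ℝ × ℝ) :=
      fun γ => γ.map (psi_cont c₀).measurable.aemeasurable with hG
    set h := LevyProkhorov.probabilityMeasureHomeomorph (Ω := ℝ × ℝ) with hh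
    -- continuity of the mean
    have hm_cont : Continuous (fun γ : ProbabilityMeasure (ℝ × ℝ) =>
        mB b (γ : Measure (ℝ × ℝ))) := by
      let fB : (ℝ × ℝ) →ᵇ ℝ := BoundedContinuousFunction.ofNormedAddCommGroup
        (fun p => b p.1) (hb.comp continuous_fst) C
        (fun p => by rw [Real.norm_eq_abs]; exact hbd p.1)
      exact ProbabilityMeasure.continuous_integral_boundedContinuousFunction fB
    have hFG0 : h (F γ₀) = h (G γ₀) := rfl
    -- key bound
    have hbound : ∀ γ, dist (h (F γ)) (h (F γ₀)) ≤
        |mB b (γ : Measure (ℝ × ℝ)) - c₀| + dist (h (G γ)) (h (G γ₀)) := by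
      intro γ
      have step1 : dist (h (F γ)) (h (G γ)) ≤ |mB b (γ : Measure (ℝ × ℝ)) - c₀| := by
        show levyProkhorovDist ((F γ) : Measure (ℝ × ℝ)) ((G γ) : Measure (ℝ × ℝ)) ≤ _
        have hcomp : ((F γ) : Measure (ℝ × ℝ)) =
            Measure.map (fun q : ℝ × ℝ => (q.1, q.2 + (mB b (γ : Measure (ℝ × ℝ)) - c₀)))
              ((G γ) : Measure (ℝ × ℝ)) := by
          show Measure.map (fun p : ℝ × ℝ => (p.1, p.1 + mB b (γ : Measure (ℝ × ℝ)) + p.2))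
              (γ : Measure (ℝ × ℝ)) = _
          rw [ProbabilityMeasure.toMeasure_map,
            Measure.map_map (by fun_prop) (psi_cont c₀).measurable]
          congr 1
          funext p
          show (p.1, p.1 + mB b (γ : Measure (ℝ × ℝ)) + p.2) =
            (p.1, p.1 + c₀ + p.2 + (mB b (γ : Measure (ℝ × ℝ)) - c₀))
          refine Prod.ext rfl ?_
          simp only
          ring
        rw [hcomp]
        exact lp_translate _ _
      calc dist (h (F γ)) (h (F γ₀))
          ≤ dist (h (F γ)) (h (G γ)) + dist (h (G γ)) (h (F γ₀)) := dist_triangle _ _ _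
        _ ≤ |mB b (γ : Measure (ℝ × ℝ)) - c₀| + dist (h (G γ)) (h (G γ₀)) := by
            rw [hFG0]; exact add_le_add_left step1 _
    -- the bounding quantity tends to 0
    have hlim : Tendsto (fun γ : ProbabilityMeasure (ℝ × ℝ) =>
        |mB b (γ : Measure (ℝ × ℝ)) - c₀| + dist (h (G γ)) (h (G γ₀))) (𝓝 γ₀) (𝓝 0) := by
      have h1 : Tendsto (fun γ : ProbabilityMeasure (ℝ × ℝ) =>
          |mB b (γ : Measure (ℝ × ℝ)) - c₀|) (𝓝 γ₀) (𝓝 0) := by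
        have := ((hm_cont.tendsto γ₀).sub_const c₀).abs
        simpa [← hc₀] using this
      have h2 : Tendsto (fun γ : ProbabilityMeasure (ℝ × ℝ) =>
          dist (h (G γ)) (h (G γ₀))) (𝓝 γ₀) (𝓝 0) := by
        have hGc : Tendsto G (𝓝 γ₀) (𝓝 (G γ₀)) :=
          (ProbabilityMeasure.continuous_map (psi_cont c₀)).tendsto γ₀
        have := (h.continuous.tendsto _).comp hGc
        exact tendsto_iff_dist_tendsto_zero.mp this
      simpa using h1.add h2
    have key : Tendsto (fun γ => h (F γ)) (𝓝 γ₀) (𝓝 (h (F γ₀))) := by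
      rw [tendsto_iff_dist_tendsto_zero]
      exact squeeze_zero (fun _ => dist_nonneg) hbound hlim
    have final := (h.symm.continuous.tendsto _).comp key
    simpa [ContinuousAt, Function.comp_def] using final
end

section
/- Let γ₀ be the bivariate standard normal law on R², B ∈ B(R) a set with γ₀(∂(B × R)) = 0, and define ψ(μ,(y,ỹ)) = (y, y + μ(B × R)·ỹ). Set Ψ_γ(μ) = γ ∘ ψ(μ,·)⁻¹ and μ*(γ) := Ψ_γ(γ) (the unique solution of μ = Ψ_γ(μ)). Then μ* is continuous (for weak convergence) at every γ ∈ P(R²) with R(γ‖γ₀) < ∞, even though μ* may fail to be continuous on all of P(R²) when ∂(B × R) ≠ ∅. -/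
open MeasureTheory ProbabilityTheory Real Filter Topology
open scoped Classical ENNReal NNReal

/-- Second toy model: `ψ(μ,(y,ỹ)) = (y, y + μ(B × ℝ)·ỹ)`. -/
noncomputable def psiB (B : Set ℝ) (μ : Measure (ℝ × ℝ)) (p : ℝ × ℝ) : ℝ × ℝ :=
  (p.1, p.1 + (μ (B ×ˢ (Set.univ : Set ℝ))).toReal * p.2)

open scoped BoundedContinuousFunction

set_option maxHeartbeats 1000000 in
private lemma key_tendsto (f : (ℝ × ℝ) →ᵇ ℝ) (γ : ProbabilityMeasure (ℝ × ℝ))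
    (c : ProbabilityMeasure (ℝ × ℝ) → ℝ) (c0 : ℝ) (hc : Tendsto c (𝓝 γ) (𝓝 c0)) :
    Tendsto (fun γ' : ProbabilityMeasure (ℝ × ℝ) =>
        ∫ p, f (p.1, p.1 + c γ' * p.2) ∂(γ' : Measure (ℝ × ℝ))) (𝓝 γ)
      (𝓝 (∫ p, f (p.1, p.1 + c0 * p.2) ∂(γ : Measure (ℝ × ℝ)))) := by
  rw [Metric.tendsto_nhds]
  intro ε hε
  set M := ‖f‖ with hMdef
  have hM : 0 ≤ M := norm_nonneg f
  set δ' : ℝ := ε / (8 * (M + 1)) with hδ'def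
  have hδ' : 0 < δ' := by positivity
  set η : ℝ≥0∞ := ENNReal.ofReal δ' with hηdef
  have hη0 : η ≠ 0 := by simp [hηdef, hδ']
  -- choose R ≥ 1 with γ (ball 0 R) > 1 - η
  obtain ⟨R, hR1, hRγ⟩ : ∃ R : ℝ, 1 ≤ R ∧
      (1 : ℝ≥0∞) - η < (γ : Measure (ℝ × ℝ)) (Metric.ball (0 : ℝ × ℝ) R) := by
    have hmono : Monotone (fun n : ℕ => Metric.ball (0 : ℝ × ℝ) n) := by
      intro m n hmn
      exact Metric.ball_subset_ball (by exact_mod_cast hmn)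
    have htb := tendsto_measure_iUnion_atTop (μ := (γ : Measure (ℝ × ℝ))) hmono
    rw [Metric.iUnion_ball_nat, measure_univ] at htb
    have h1lt : (1 : ℝ≥0∞) - η < 1 := ENNReal.sub_lt_self ENNReal.one_ne_top one_ne_zero hη0
    obtain ⟨n, hn⟩ := (htb.eventually (eventually_gt_nhds h1lt)).exists
    refine ⟨(n : ℝ) + 1, by linarith [Nat.cast_nonneg (α := ℝ) n], lt_of_lt_of_le hn (measure_mono ?_)⟩
    exact Metric.ball_subset_ball (by linarith)
  have hR0 : (0:ℝ) < R := by linarith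
  set G : Set (ℝ × ℝ) := Metric.ball (0 : ℝ × ℝ) R with hGdef
  set R' : ℝ := (|c0| + 2) * R with hR'def
  set K : Set (ℝ × ℝ) := Metric.closedBall (0 : ℝ × ℝ) R' with hKdef
  -- uniform continuity on K
  have hu : UniformContinuousOn f K :=
    (isCompact_closedBall _ _).uniformContinuousOn_of_continuous f.continuous.continuousOn
  rw [Metric.uniformContinuousOn_iff] at hu
  obtain ⟨δ₂, hδ₂, hu⟩ := hu (ε / 4) (by positivity)
  set θ : ℝ := min 1 (δ₂ / (R + 1)) with hθdef
  have hθ : 0 < θ := lt_min one_pos (by positivity)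
  -- the fixed bounded continuous function f ∘ ψ_{c0}
  set G2 : (ℝ × ℝ) →ᵇ ℝ := f.compContinuous
    ⟨fun p => (p.1, p.1 + c0 * p.2), by fun_prop⟩ with hG2def
  have hG2eq : ∀ p : ℝ × ℝ, G2 p = f (p.1, p.1 + c0 * p.2) := fun p => rfl
  -- three eventualities
  have E1 : ∀ᶠ γ' in 𝓝 γ, dist (c γ') c0 < θ := Metric.tendsto_nhds.mp hc θ hθ
  have E2 : ∀ᶠ γ' : ProbabilityMeasure (ℝ × ℝ) in 𝓝 γ, (1 : ℝ≥0∞) - η < (γ' : Measure (ℝ × ℝ)) G := by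
    have hlim := ProbabilityMeasure.le_liminf_measure_open_of_tendsto
      (μ := γ) (μs := fun γ' : ProbabilityMeasure (ℝ × ℝ) => γ')
      (L := 𝓝 γ) tendsto_id (show IsOpen G from Metric.isOpen_ball)
    exact Filter.eventually_lt_of_lt_liminf (lt_of_lt_of_le hRγ hlim)
  have E3 : ∀ᶠ γ' : ProbabilityMeasure (ℝ × ℝ) in 𝓝 γ, dist (∫ p, G2 p ∂(γ' : Measure (ℝ × ℝ)))
      (∫ p, G2 p ∂(γ : Measure (ℝ × ℝ))) < ε / 2 := by
    have hcont := MeasureTheory.ProbabilityMeasure.continuous_integral_boundedContinuousFunction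
      (X := ℝ × ℝ) G2
    exact Metric.tendsto_nhds.mp (hcont.tendsto γ) (ε / 2) (by positivity)
  filter_upwards [E1, E2, E3] with γ' h1 h2 h3
  set c' : ℝ := c γ' with hc'def
  -- measure of complement of G is small
  have hGm : MeasurableSet G := Metric.isOpen_ball.measurableSet
  have hcompl : ((γ' : Measure (ℝ × ℝ)) Gᶜ).toReal ≤ δ' := by
    have hle : (γ' : Measure (ℝ × ℝ)) Gᶜ ≤ η := by
      rw [prob_compl_eq_one_sub hGm]
      calc (1 : ℝ≥0∞) - (γ' : Measure (ℝ × ℝ)) G ≤ 1 - (1 - η) :=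
            tsub_le_tsub_left h2.le 1
        _ ≤ η := tsub_le_iff_right.2 le_add_tsub
    exact ENNReal.toReal_le_of_le_ofReal hδ'.le hle
  -- pointwise bound
  set g1 : ℝ × ℝ → ℝ := fun p => f (p.1, p.1 + c' * p.2) with hg1def
  set g2 : ℝ × ℝ → ℝ := fun p => f (p.1, p.1 + c0 * p.2) with hg2def
  set bnd : ℝ × ℝ → ℝ := fun p => ε / 4 + Set.indicator Gᶜ (fun _ => 2 * M) p with hbnddef
  have hc'bound : |c'| ≤ |c0| + 1 := by
    have := abs_sub_abs_le_abs_sub c' c0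
    have h1' : |c' - c0| < θ := by rwa [Real.dist_eq] at h1
    have hθ1 : θ ≤ 1 := min_le_left _ _
    linarith
  have hpoint : ∀ p : ℝ × ℝ, |g1 p - g2 p| ≤ bnd p := by
    intro p
    by_cases hp : p ∈ G
    · have hpn : ‖p‖ < R := by rwa [Metric.mem_ball, dist_zero_right] at hp
      have hp1 : ‖p.1‖ ≤ ‖p‖ := norm_fst_le p
      have hp2 : ‖p.2‖ ≤ ‖p‖ := norm_snd_le p
      set x : ℝ × ℝ := (p.1, p.1 + c' * p.2) with hxdef
      set y : ℝ × ℝ := (p.1, p.1 + c0 * p.2) with hydef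
      have hnorm2 : ∀ d : ℝ, |d| ≤ |c0| + 1 → |p.1 + d * p.2| ≤ R' := by
        intro d hd
        have : |p.1 + d * p.2| ≤ |p.1| + |d| * |p.2| := by
          calc |p.1 + d * p.2| ≤ |p.1| + |d * p.2| := abs_add_le _ _
            _ = |p.1| + |d| * |p.2| := by rw [abs_mul]
        have h1a : |p.1| ≤ R := le_of_lt (lt_of_le_of_lt hp1 hpn)
        have h2a : |p.2| ≤ R := le_of_lt (lt_of_le_of_lt hp2 hpn)
        have hd0 : 0 ≤ |d| := abs_nonneg d
        have : |p.1 + d * p.2| ≤ R + (|c0| + 1) * R := by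
          nlinarith [abs_nonneg p.2]
        calc |p.1 + d * p.2| ≤ R + (|c0| + 1) * R := this
          _ = R' := by rw [hR'def]; ring
      have hxK : x ∈ K := by
        rw [hKdef, Metric.mem_closedBall, dist_zero_right, Prod.norm_def]
        refine max_le ?_ ?_
        · calc ‖p.1‖ ≤ R := le_of_lt (lt_of_le_of_lt hp1 hpn)
            _ ≤ R' := by rw [hR'def]; nlinarith [abs_nonneg c0]
        · exact hnorm2 c' hc'bound
      have hyK : y ∈ K := by
        rw [hKdef, Metric.mem_closedBall, dist_zero_right, Prod.norm_def]
        refine max_le ?_ ?_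
        · calc ‖p.1‖ ≤ R := le_of_lt (lt_of_le_of_lt hp1 hpn)
            _ ≤ R' := by rw [hR'def]; nlinarith [abs_nonneg c0]
        · exact hnorm2 c0 (by linarith [abs_nonneg c0])
      have hdistxy : dist x y < δ₂ := by
        rw [Prod.dist_eq]
        have hd1 : dist x.1 y.1 = 0 := by simp [hxdef, hydef]
        have hd2 : dist x.2 y.2 = |c' - c0| * |p.2| := by
          rw [Real.dist_eq, ← abs_mul]
          show |(p.1 + c' * p.2) - (p.1 + c0 * p.2)| = |(c' - c0) * p.2|
          ring_nf
        rw [hd1, hd2]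
        have h1' : |c' - c0| < θ := by rwa [Real.dist_eq] at h1
        have h2a : |p.2| ≤ R := le_of_lt (lt_of_le_of_lt hp2 hpn)
        have hθR : θ * R < δ₂ := by
          have hθle : θ ≤ δ₂ / (R + 1) := min_le_right _ _
          have : θ * R ≤ δ₂ / (R + 1) * R := by nlinarith
          have h2 : δ₂ / (R + 1) * R < δ₂ := by
            rw [div_mul_eq_mul_div, div_lt_iff₀ (by linarith)]
            nlinarith
          linarith
        have hle : |c' - c0| * |p.2| ≤ θ * R :=
          mul_le_mul h1'.le h2a (abs_nonneg _) hθ.le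
        exact max_lt hδ₂ (lt_of_le_of_lt hle hθR)
      have := hu x hxK y hyK hdistxy
      rw [Real.dist_eq] at this
      have hb : bnd p = ε / 4 := by
        rw [hbnddef]
        simp [Set.indicator_of_notMem (by simpa using hp : p ∉ Gᶜ)]
      rw [hb]
      exact le_of_lt this
    · have hb : bnd p = ε / 4 + 2 * M := by
        rw [hbnddef]
        simp [Set.indicator_of_mem (by simpa using hp : p ∈ Gᶜ)]
      rw [hb]
      have hx : |g1 p| ≤ M := f.norm_coe_le_norm _
      have hy : |g2 p| ≤ M := f.norm_coe_le_norm _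
      have := abs_sub (g1 p) (g2 p)
      calc |g1 p - g2 p| ≤ |g1 p| + |g2 p| := abs_sub _ _
        _ ≤ ε / 4 + 2 * M := by linarith
  -- integrability
  set G1 : (ℝ × ℝ) →ᵇ ℝ := f.compContinuous
    ⟨fun p => (p.1, p.1 + c' * p.2), by fun_prop⟩ with hG1def
  have hG1g : ⇑G1 = g1 := rfl
  have hG2g : ⇑G2 = g2 := rfl
  have hint1 : Integrable g1 (γ' : Measure (ℝ × ℝ)) := hG1g ▸ G1.integrable _
  have hint2 : Integrable g2 (γ' : Measure (ℝ × ℝ)) := hG2g ▸ G2.integrable _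
  have hbndint : Integrable bnd (γ' : Measure (ℝ × ℝ)) :=
    (integrable_const _).add ((integrable_const _).indicator hGm.compl)
  have hsub : |(∫ p, g1 p ∂(γ' : Measure (ℝ × ℝ))) - ∫ p, g2 p ∂(γ' : Measure (ℝ × ℝ))|
      ≤ ∫ p, bnd p ∂(γ' : Measure (ℝ × ℝ)) := by
    rw [← integral_sub hint1 hint2]
    calc |∫ p, (g1 p - g2 p) ∂(γ' : Measure (ℝ × ℝ))|
        ≤ ∫ p, |g1 p - g2 p| ∂(γ' : Measure (ℝ × ℝ)) := by
          simpa [Real.norm_eq_abs] using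
            norm_integral_le_integral_norm (μ := (γ' : Measure (ℝ × ℝ)))
              (fun p => g1 p - g2 p)
      _ ≤ ∫ p, bnd p ∂(γ' : Measure (ℝ × ℝ)) :=
          integral_mono (hint1.sub hint2).abs hbndint hpoint
  have hbndval : ∫ p, bnd p ∂(γ' : Measure (ℝ × ℝ))
      = ε / 4 + ((γ' : Measure (ℝ × ℝ)) Gᶜ).toReal * (2 * M) := by
    rw [hbnddef]
    rw [integral_add (integrable_const _) ((integrable_const _).indicator hGm.compl)]
    rw [integral_indicator_const _ hGm.compl]
    simp [smul_eq_mul, mul_comm]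
    exact Or.inl rfl
  have h2Mδ : ((γ' : Measure (ℝ × ℝ)) Gᶜ).toReal * (2 * M) ≤ 2 * M * δ' := by
    have := mul_le_mul_of_nonneg_right hcompl (by positivity : (0:ℝ) ≤ 2 * M)
    linarith [this]
  have hkey24 : 2 * M * δ' < ε / 4 := by
    have hM1 : M + 1 ≠ 0 := by positivity
    have e1 : 2 * (M + 1) * δ' = ε / 4 := by
      rw [hδ'def]; field_simp; ring
    have e2 : 2 * (M + 1) * δ' = 2 * M * δ' + 2 * δ' := by ring
    linarith [e1, e2, hδ']
  have hAB : dist (∫ p, g1 p ∂(γ' : Measure (ℝ × ℝ))) (∫ p, g2 p ∂(γ' : Measure (ℝ × ℝ)))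
      < ε / 2 := by
    rw [Real.dist_eq]
    linarith [hsub, hbndval, h2Mδ, hkey24]
  have h3' : dist (∫ p, g2 p ∂(γ' : Measure (ℝ × ℝ))) (∫ p, g2 p ∂(γ : Measure (ℝ × ℝ)))
      < ε / 2 := by
    simpa [hG2g] using h3
  calc dist (∫ p, g1 p ∂(γ' : Measure (ℝ × ℝ))) (∫ p, g2 p ∂(γ : Measure (ℝ × ℝ)))
      ≤ dist (∫ p, g1 p ∂(γ' : Measure (ℝ × ℝ))) (∫ p, g2 p ∂(γ' : Measure (ℝ × ℝ)))
        + dist (∫ p, g2 p ∂(γ' : Measure (ℝ × ℝ))) (∫ p, g2 p ∂(γ : Measure (ℝ × ℝ))) :=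
        dist_triangle _ _ _
    _ < ε / 2 + ε / 2 := add_lt_add hAB h3'
    _ = ε := by ring

/-- For a `γ₀`-continuity set `B × ℝ` (boundary of null `γ₀`-measure), `μ*(γ) := Ψ_γ(γ)` is
the unique solution of `μ = Ψ_γ(μ)`, and `μ*` is continuous for weak convergence at every
`γ` with `R(γ ‖ γ₀) < ∞`. -/
theorem stmt12 (B : Set ℝ) (hB : MeasurableSet B)
    (hbd : stdNormal2 (frontier (B ×ˢ (Set.univ : Set ℝ))) = 0)
    (hae : ∀ γ : ProbabilityMeasure (ℝ × ℝ),
      AEMeasurable (psiB B (γ : Measure (ℝ × ℝ))) (γ : Measure (ℝ × ℝ))) :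
    (∀ γ : Measure (ℝ × ℝ), IsProbabilityMeasure γ →
      ∀ μ : Measure (ℝ × ℝ), IsProbabilityMeasure μ →
        (Measure.map (psiB B μ) γ = μ ↔ μ = Measure.map (psiB B γ) γ)) ∧
    ∀ γ : ProbabilityMeasure (ℝ × ℝ), relEnt (γ : Measure (ℝ × ℝ)) stdNormal2 < ⊤ →
      ContinuousAt (fun γ' : ProbabilityMeasure (ℝ × ℝ) => γ'.map (hae γ')) γ := by
  have hS : MeasurableSet (B ×ˢ (Set.univ : Set ℝ)) := hB.prod MeasurableSet.univ
  have hpre : ∀ ν : Measure (ℝ × ℝ),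
      psiB B ν ⁻¹' (B ×ˢ (Set.univ : Set ℝ)) = B ×ˢ (Set.univ : Set ℝ) := by
    intro ν; ext p; simp [psiB, Set.mem_prod]
  have hmeas : ∀ ν : Measure (ℝ × ℝ), Measurable (psiB B ν) := fun ν =>
    measurable_fst.prodMk (measurable_fst.add (measurable_snd.const_mul _))
  constructor
  · intro γ hγ μ hμ
    constructor
    · intro h
      have hSval : μ (B ×ˢ (Set.univ : Set ℝ)) = γ (B ×ˢ (Set.univ : Set ℝ)) := by
        conv_lhs => rw [← h]
        rw [Measure.map_apply (hmeas μ) hS, hpre]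
      have hfun : psiB B μ = psiB B γ := by
        funext p; simp [psiB, hSval]
      rw [← hfun]; exact h.symm
    · intro h
      have hSval : μ (B ×ˢ (Set.univ : Set ℝ)) = γ (B ×ˢ (Set.univ : Set ℝ)) := by
        rw [h, Measure.map_apply (hmeas γ) hS, hpre]
      have hfun : psiB B μ = psiB B γ := by
        funext p; simp [psiB, hSval]
      rw [hfun, ← h]
  · intro γ hrel
    have habs : (γ : Measure (ℝ × ℝ)) ≪ stdNormal2 := by
      by_contra h
      have hneg : ¬ ((γ : Measure (ℝ × ℝ)) ≪ stdNormal2 ∧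
          Integrable (llr (γ : Measure (ℝ × ℝ)) stdNormal2) (γ : Measure (ℝ × ℝ))) :=
        fun hh => h hh.1
      rw [relEnt, if_neg hneg] at hrel
      exact lt_irrefl _ hrel
    have hfr : (γ : Measure (ℝ × ℝ)) (frontier (B ×ˢ (Set.univ : Set ℝ))) = 0 := habs hbd
    have hc : Tendsto (fun γ' : ProbabilityMeasure (ℝ × ℝ) =>
        ((γ' : Measure (ℝ × ℝ)) (B ×ˢ (Set.univ : Set ℝ))).toReal) (𝓝 γ)
        (𝓝 (((γ : Measure (ℝ × ℝ)) (B ×ˢ (Set.univ : Set ℝ))).toReal)) := by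
      have h0 := ProbabilityMeasure.tendsto_measure_of_null_frontier_of_tendsto'
        (μ := γ) (μs := fun γ' : ProbabilityMeasure (ℝ × ℝ) => γ') (L := 𝓝 γ)
        tendsto_id hfr
      exact (ENNReal.tendsto_toReal (measure_ne_top _ _)).comp h0
    rw [ContinuousAt, ProbabilityMeasure.tendsto_iff_forall_integral_tendsto]
    intro f
    have hrw : ∀ γ' : ProbabilityMeasure (ℝ × ℝ),
        (∫ ω, f ω ∂((γ'.map (hae γ')) : Measure (ℝ × ℝ)))
          = ∫ p, f (p.1, p.1 + ((γ' : Measure (ℝ × ℝ)) (B ×ˢ (Set.univ : Set ℝ))).toReal * p.2)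
              ∂(γ' : Measure (ℝ × ℝ)) := by
      intro γ'
      rw [ProbabilityMeasure.toMeasure_map,
        integral_map (hae γ') f.continuous.aestronglyMeasurable]
      rfl
    simp only [hrw]
    exact key_tendsto f γ _ _ hc
end
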